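/- arXiv:2203.00279 — 12 statements merged into one kernel-verified Lean document; each statement's English description precedes it below -/
import Mathlib

section
/- Let A, S, S̄ be finite sets with #S = #S̄, f : A → A a map, and λ : A → S a surjective map. Then f is a bijection if and only if both of the following hold: (i) f is injective on λ⁻¹(s) for every s ∈ S; and (ii) there exists a pair of maps (λ̄, h), with λ̄ : A → S̄ surjective and h : S → S̄ bijective, such that λ̄ ∘ f = h ∘ λ. -/
/-- Lemma 2.3: Let `A, S, S̄` be finite sets with `#S = #S̄`, `f : A → A` a map and
`λ : A → S` a surjective map. Then `f` is a bijection iff (i) `f` is injective on each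
fiber `λ⁻¹(s)`, and (ii) there exists a pair `(λ̄, h)` with `λ̄ : A → S̄` surjective and
`h : S → S̄` bijective such that `λ̄ ∘ f = h ∘ λ`. -/
theorem stmt1 {A S Sb : Type*} [Fintype A] [Fintype S] [Fintype Sb]
    (hcard : Fintype.card S = Fintype.card Sb)
    (f : A → A) (lam : A → S) (hlam : Function.Surjective lam) :
    Function.Bijective f ↔
      ((∀ s : S, Set.InjOn f {a : A | lam a = s}) ∧
        ∃ (lamb : A → Sb) (h : S → Sb),
          Function.Surjective lamb ∧ Function.Bijective h ∧ lamb ∘ f = h ∘ lam) := by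
  constructor
  · intro hf
    refine ⟨fun s => hf.1.injOn, ?_⟩
    let e := Fintype.equivOfCardEq hcard
    let g := (Equiv.ofBijective f hf).symm
    refine ⟨e ∘ lam ∘ g, e, ?_, e.bijective, ?_⟩
    · exact (e.surjective.comp hlam).comp g.surjective
    · ext a
      have : g (f a) = a := (Equiv.ofBijective f hf).symm_apply_apply a
      simp [this]
  · rintro ⟨hinj, lamb, h, _, hh, hcomm⟩
    have finj : Function.Injective f := by
      intro a b hab
      have : h (lam a) = h (lam b) := by
        have := congrFun hcomm a
        have h2 := congrFun hcomm b
        simp only [Function.comp_apply] at this h2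
        rw [← this, ← h2, hab]
      have hl : lam a = lam b := hh.1 this
      exact hinj (lam a) (by simp) (by simp [hl]) hab
    exact Finite.injective_iff_bijective.mp finj
end

section
/- Let A, S, S̄ be finite sets with #S = #S̄, f : A → A a map, λ : A → S a surjective map, and h : S → S̄ a bijection. Then f is a bijection if and only if both of the following hold: (i) f is injective on λ⁻¹(s) for every s ∈ S; and (ii) there exists a uniquely determined surjective map λ̄ : A → S̄ such that λ̄ ∘ f = h ∘ λ. -/
/-- Corollary 2.4: Let `A, S, S̄` be finite sets with `#S = #S̄`, `f : A → A` a map,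
`λ : A → S` a surjective map and `h : S → S̄` a bijection. Then `f` is a bijection iff
(i) `f` is injective on each fiber `λ⁻¹(s)`, and (ii) there exists a uniquely determined
surjective map `λ̄ : A → S̄` such that `λ̄ ∘ f = h ∘ lam`. -/
theorem stmt2 {A S Sb : Type*} [Fintype A] [Fintype S] [Fintype Sb]
    (hcard : Fintype.card S = Fintype.card Sb)
    (f : A → A) (lam : A → S) (hlam : Function.Surjective lam)
    (h : S → Sb) (hh : Function.Bijective h) :
    Function.Bijective f ↔
      ((∀ s : S, Set.InjOn f {a : A | lam a = s}) ∧
        ∃! lamb : A → Sb, Function.Surjective lamb ∧ lamb ∘ f = h ∘ lam) := by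
  constructor
  · intro hf
    refine ⟨fun s => hf.injective.injOn, ?_⟩
    let e := Equiv.ofBijective f hf
    refine ⟨h ∘ lam ∘ e.symm, ⟨hh.surjective.comp (hlam.comp e.symm.surjective), ?_⟩, ?_⟩
    · funext a
      simp [e]
    · rintro g ⟨-, hg⟩
      funext a
      have := congrFun hg (e.symm a)
      have hfa : f (e.symm a) = a := e.apply_symm_apply a
      rw [Function.comp_apply, hfa] at this
      exact this
  · rintro ⟨hinj, lamb, ⟨hsurj, hcomm⟩, huniq⟩
    by_cases hsb : Subsingleton S
    · -- then f is injective on all of A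
      have hfin : Function.Injective f := by
        intro a b hab
        exact hinj (lam a) (by simp) (by simp [Subsingleton.elim (lam b) (lam a)]) hab
      exact (Finite.injective_iff_bijective).mp hfin
    · -- Sb has at least two elements; show f surjective
      have hsurf : Function.Surjective f := by
        classical
        by_contra hns
        obtain ⟨a₀, ha₀⟩ := not_forall.mp hns
        push_neg at ha₀
        have : Nontrivial S := not_subsingleton_iff_nontrivial.mp hsb
        have : Nontrivial Sb := by
          rw [← Fintype.one_lt_card_iff_nontrivial, ← hcard,
            Fintype.one_lt_card_iff_nontrivial]
          exact this
        obtain ⟨t, ht⟩ := exists_ne (lamb a₀)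
        have hcomm' : (Function.update lamb a₀ t) ∘ f = h ∘ lam := by
          funext a
          have : Function.update lamb a₀ t (f a) = lamb (f a) :=
            Function.update_of_ne (ha₀ a) t lamb
          rw [Function.comp_apply, this, ← Function.comp_apply (f := lamb), hcomm]
        have hsurj' : Function.Surjective (Function.update lamb a₀ t) := by
          intro y
          obtain ⟨s, hs⟩ := hh.surjective y
          obtain ⟨a, ha⟩ := hlam s
          exact ⟨f a, by rw [← Function.comp_apply (f := Function.update lamb a₀ t), hcomm',
            Function.comp_apply, ha, hs]⟩
        have := huniq _ ⟨hsurj', hcomm'⟩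
        have := congrFun this a₀
        simp at this
        exact ht this
      exact (Finite.surjective_iff_bijective).mp hsurf
end

section
/- Let q be a prime power and let S, S̄ be subsets of F_q^* with #S = #S̄. Let f : F_q^* → F_q^*, g : S → S̄, λ : F_q^* → S, λ̄ : F_q^* → S̄ be maps such that λ and λ̄ are surjective and λ̄ ∘ f = g ∘ λ. Suppose f₁ : F_q^* → F_q^* is a bijection, h : S → F_q^* is a map, and f(x) = f₁(x)·h(λ(x)) for all x ∈ F_q^*, and suppose f is a bijection of F_q^*. Then, denoting by f₁⁻¹, f⁻¹ and g⁻¹ the compositional inverses of f₁, f and g respectively, for all x ∈ F_q^* one has f⁻¹(x) = f₁⁻¹( x / h(g⁻¹(λ̄(x))) ). -/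
/-- Theorem 3.1: Let `S, S̄ ⊆ F_q^*` with `#S = #S̄`, and `f : F_q^* → F_q^*`,
`g : S → S̄`, `λ : F_q^* → S`, `λ̄ : F_q^* → S̄` with `λ, λ̄` surjective and
`λ̄ ∘ f = g ∘ λ`. Let `f₁` be a bijection of `F_q^*` and `f(x) = f₁(x)·h(λ(x))` a
bijection of `F_q^*`. Then `f⁻¹(x) = f₁⁻¹(x / h(g⁻¹(λ̄(x))))`. -/
theorem stmt6 {F : Type*} [Field F] [Fintype F]
    (S Sb : Set Fˣ) (hcard : S.ncard = Sb.ncard)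
    (f f₁ : Fˣ → Fˣ) (g : S → Sb) (lam : Fˣ → S) (lamb : Fˣ → Sb)
    (hlam : Function.Surjective lam) (hlamb : Function.Surjective lamb)
    (hcomm : ∀ x : Fˣ, lamb (f x) = g (lam x))
    (h : S → Fˣ)
    (hf₁ : Function.Bijective f₁)
    (hfdef : ∀ x : Fˣ, f x = f₁ x * h (lam x))
    (hf : Function.Bijective f)
    (f₁inv finv : Fˣ → Fˣ) (ginv : Sb → S)
    (hf₁inv₁ : Function.LeftInverse f₁inv f₁) (hf₁inv₂ : Function.RightInverse f₁inv f₁)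
    (hfinv₁ : Function.LeftInverse finv f) (hfinv₂ : Function.RightInverse finv f)
    (hginv₁ : Function.LeftInverse ginv g) (hginv₂ : Function.RightInverse ginv g) :
    ∀ x : Fˣ, finv x = f₁inv (x / h (ginv (lamb x))) := by
  intro x
  have hx : f (finv x) = x := hfinv₂ x
  have h1 : lamb x = g (lam (finv x)) := by simpa [hx] using hcomm (finv x)
  have h2 : ginv (lamb x) = lam (finv x) := by rw [h1, hginv₁]
  rw [h2]
  have h3 : x = f₁ (finv x) * h (lam (finv x)) := by rw [← hfdef, hx]
  have h4 := mul_div_cancel_right (f₁ (finv x)) (h (lam (finv x)))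
  rw [← h3] at h4
  rw [h4, hf₁inv₁]
end

section
/- Let q be a power of a prime p, n a positive integer, and S a subset of F_{q^n} containing 0. Let h, k ∈ F_{q^n}[x] with h(0) ≠ 0 and k(0) = 0, and let λ(x) ∈ F_{q^n}[x] satisfy h(λ(F_{q^n})) ⊆ S and λ(aα) = k(a)λ(α) for all a ∈ S and all α ∈ F_{q^n}. Suppose f(x) = x·h(λ(x)) is a permutation of F_{q^n}, and let g⁻¹ be the compositional inverse of g(x) = x·k(h(x)) on λ(F_{q^n}). Then the compositional inverse of f is given by f⁻¹(x) = x / h(g⁻¹(λ(x))) for all x ∈ F_{q^n} for which h(g⁻¹(λ(x))) ≠ 0, and in particular f⁻¹(f(y)) = y for all y ∈ F_{q^n}. -/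
/-- Corollary 3.2: Let `q` be a power of a prime `p`, `n ≥ 1`, and `F` the field with
`q^n` elements. Let `S ⊆ F` with `0 ∈ S`, let `h, k` be polynomials with `h(0) ≠ 0`,
`k(0) = 0`, `h(λ(F)) ⊆ S` and `λ(aα) = k(a)λ(α)` for all `a ∈ S`, `α ∈ F`. Suppose
`f(x) = x·h(λ(x))` permutes `F` and let `g⁻¹` be the compositional inverse of
`g(x) = x·k(h(x))` on `λ(F)`. Then `f⁻¹(x) = x / h(g⁻¹(λ(x)))` whenever
`h(g⁻¹(λ(x))) ≠ 0`, and in particular `f⁻¹(f(y)) = y` for all `y`. -/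
theorem stmt7 {F : Type*} [Field F] [Fintype F]
    (p q n : ℕ) (hp : p.Prime) (hq : ∃ e : ℕ, q = p ^ e) (hn : 0 < n)
    (hcard : Fintype.card F = q ^ n)
    (S : Set F) (h0S : (0 : F) ∈ S)
    (h k lam : Polynomial F)
    (hh0 : h.eval 0 ≠ 0) (hk0 : k.eval 0 = 0)
    (hhS : ∀ x : F, h.eval (lam.eval x) ∈ S)
    (hmul : ∀ a ∈ S, ∀ α : F, lam.eval (a * α) = k.eval a * lam.eval α)
    (f : F → F) (hfdef : ∀ x : F, f x = x * h.eval (lam.eval x))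
    (hf : Function.Bijective f)
    (ginv : F → F)
    (hginv : ∀ s ∈ Set.range (fun x : F => lam.eval x),
      ginv (s * k.eval (h.eval s)) = s)
    (finv : F → F)
    (hfinv₁ : Function.LeftInverse finv f) (hfinv₂ : Function.RightInverse finv f) :
    (∀ x : F, h.eval (ginv (lam.eval x)) ≠ 0 →
        finv x = x / h.eval (ginv (lam.eval x))) ∧
    (∀ y : F, finv (f y) = y) := by
  have key : ∀ y : F, lam.eval (f y) = lam.eval y * k.eval (h.eval (lam.eval y)) := by
    intro y
    rw [hfdef y, mul_comm y, hmul _ (hhS y) y, mul_comm]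
  have hginv' : ∀ y : F, ginv (lam.eval (f y)) = lam.eval y := by
    intro y
    rw [key y]
    exact hginv _ ⟨y, rfl⟩
  refine ⟨fun x hx => ?_, fun y => hfinv₁ y⟩
  obtain ⟨y, rfl⟩ := hf.2 x
  rw [hginv' y] at hx ⊢
  rw [hfinv₁ y, hfdef y, mul_div_assoc, div_self hx, mul_one]
end

section
/- Let q be a prime power, ℓ a positive divisor of q−1, s = (q−1)/ℓ, and h ∈ F_q[x]. Suppose f(x) = x^r h(x^s) is a permutation of F_q, so that gcd(r, s) = 1 and g(x) = x^r h(x)^s permutes the group μ_ℓ of ℓ-th roots of unity in F_q^*; let g⁻¹ be the compositional inverse of g on μ_ℓ. Assume further gcd(r, q−1) = 1, and let a, b be positive integers with br = 1 + a(q−1). Then the compositional inverse of f satisfies f⁻¹(x) = x^b · h(g⁻¹(x^s))^{−b} for all x ∈ F_q^* (and f⁻¹(0) = 0). -/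
/-- Corollary 3.4: Let `F = F_q`, `ℓ ∣ q−1`, `s = (q−1)/ℓ`, `h ∈ F_q[x]`. Suppose
`f(x) = x^r h(x^s)` permutes `F_q`, so that `gcd(r,s) = 1` and `g(x) = x^r h(x)^s`
permutes `μ_ℓ`, with `g⁻¹` the compositional inverse of `g` on `μ_ℓ`. Assume
`gcd(r, q−1) = 1` and `b·r = 1 + a·(q−1)` with `a, b` positive. Then
`f⁻¹(x) = x^b · h(g⁻¹(x^s))^{−b}` for all `x ≠ 0`, and `f⁻¹(0) = 0`. -/
theorem stmt8 {F : Type*} [Field F] [Fintype F]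
    (r ℓ s a b : ℕ) (hℓpos : 0 < ℓ) (hℓdvd : ℓ ∣ Fintype.card F - 1)
    (hs : s = (Fintype.card F - 1) / ℓ)
    (h : Polynomial F)
    (f : F → F) (hfdef : ∀ x : F, f x = x ^ r * h.eval (x ^ s))
    (hf : Function.Bijective f)
    (hgcdrs : Nat.gcd r s = 1)
    (hgbij : Set.BijOn (fun x : F => x ^ r * (h.eval x) ^ s)
      {x : F | x ^ ℓ = 1} {x : F | x ^ ℓ = 1})
    (ginv : F → F)
    (hginv : ∀ x : F, x ^ ℓ = 1 → ginv (x ^ r * (h.eval x) ^ s) = x)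
    (hgcd : Nat.gcd r (Fintype.card F - 1) = 1)
    (ha : 0 < a) (hb : 0 < b) (hbr : b * r = 1 + a * (Fintype.card F - 1))
    (finv : F → F)
    (hfinv₁ : Function.LeftInverse finv f) (hfinv₂ : Function.RightInverse finv f) :
    finv 0 = 0 ∧
    ∀ x : F, x ≠ 0 → finv x = x ^ b * ((h.eval (ginv (x ^ s)))⁻¹) ^ b := by
  have hr : r ≠ 0 := by rintro rfl; simp at hbr; omega
  have hf0 : f 0 = 0 := by rw [hfdef]; simp [zero_pow hr]
  refine ⟨by have := hfinv₁ 0; rwa [hf0] at this, ?_⟩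
  intro x hx
  set y := finv x with hy
  have hfy : f y = x := hfinv₂ x
  have hy0 : y ≠ 0 := by rintro h0; rw [h0, hf0] at hfy; exact hx hfy.symm
  have hyq : y ^ (Fintype.card F - 1) = 1 := FiniteField.pow_card_sub_one_eq_one y hy0
  have hsl : s * ℓ = Fintype.card F - 1 := by rw [hs]; exact Nat.div_mul_cancel hℓdvd
  have hys : (y ^ s) ^ ℓ = 1 := by rw [← pow_mul, hsl, hyq]
  have hxe : x = y ^ r * h.eval (y ^ s) := by rw [← hfy, hfdef]
  have hxs : x ^ s = (y ^ s) ^ r * (h.eval (y ^ s)) ^ s := by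
    rw [hxe, mul_pow, ← pow_mul, ← pow_mul, mul_comm r s, pow_mul]
  have hg : ginv (x ^ s) = y ^ s := by rw [hxs]; exact hginv _ hys
  have hne : h.eval (y ^ s) ≠ 0 := by
    intro h0; rw [hxe, h0, mul_zero] at hx; exact hx rfl
  rw [hg, hxe, mul_pow, mul_assoc, ← mul_pow, mul_inv_cancel₀ hne, one_pow, mul_one,
    ← pow_mul, mul_comm r b, hbr, pow_add, mul_comm a, pow_mul, hyq, one_pow, pow_one, mul_one]
end

section
/- Let q be a prime power and let S, S̄ be subsets of F_q with #S = #S̄. Let f : F_q → F_q, g : S → S̄, λ : F_q → S, λ̄ : F_q → S̄ be maps such that λ and λ̄ are surjective and λ̄ ∘ f = g ∘ λ. Suppose f₁ : F_q → F_q is a bijection, h : S → F_q is a map, f(x) = f₁(x) + h(λ(x)) for all x ∈ F_q, and f is a bijection of F_q. Then, denoting by f₁⁻¹, f⁻¹ and g⁻¹ the compositional inverses of f₁, f and g respectively, for all x ∈ F_q one has f⁻¹(x) = f₁⁻¹( x − h(g⁻¹(λ̄(x))) ). -/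
/-- Theorem 3.5: Let `S, S̄ ⊆ F_q` with `#S = #S̄`, and `f : F_q → F_q`, `g : S → S̄`,
`λ : F_q → S`, `λ̄ : F_q → S̄` with `λ, λ̄` surjective and `λ̄ ∘ f = g ∘ λ`. Let `f₁`
be a bijection of `F_q` and `f(x) = f₁(x) + h(λ(x))` a bijection of `F_q`. Then
`f⁻¹(x) = f₁⁻¹(x − h(g⁻¹(λ̄(x))))`. -/
theorem stmt9 {F : Type*} [Field F] [Fintype F]
    (S Sb : Set F) (hcard : S.ncard = Sb.ncard)
    (f f₁ : F → F) (g : S → Sb) (lam : F → S) (lamb : F → Sb)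
    (hlam : Function.Surjective lam) (hlamb : Function.Surjective lamb)
    (hcomm : ∀ x : F, lamb (f x) = g (lam x))
    (h : S → F)
    (hf₁ : Function.Bijective f₁)
    (hfdef : ∀ x : F, f x = f₁ x + h (lam x))
    (hf : Function.Bijective f)
    (f₁inv finv : F → F) (ginv : Sb → S)
    (hf₁inv₁ : Function.LeftInverse f₁inv f₁) (hf₁inv₂ : Function.RightInverse f₁inv f₁)
    (hfinv₁ : Function.LeftInverse finv f) (hfinv₂ : Function.RightInverse finv f)
    (hginv₁ : Function.LeftInverse ginv g) (hginv₂ : Function.RightInverse ginv g) :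
    ∀ x : F, finv x = f₁inv (x - h (ginv (lamb x))) := by
  intro x
  have hx : f (finv x) = x := hfinv₂ x
  have h1 : lamb x = g (lam (finv x)) := by conv_lhs => rw [← hx, hcomm]
  have h2 : ginv (lamb x) = lam (finv x) := by rw [h1, hginv₁]
  rw [h2]
  have h3 : f₁ (finv x) = x - h (lam (finv x)) := by
    rw [eq_sub_iff_add_eq, ← hfdef, hx]
  rw [← h3, hf₁inv₁]
end

section
/- Let F be a finite field and S, S̄ finite subsets of F with #S = #S̄. Let λ : F → S and λ̄ : F → S̄ be surjective maps with λ̄ additive, i.e., λ̄(x + y) = λ̄(x) + λ̄(y) for all x, y ∈ F. Let g₀ : S → F and g : F → F be maps such that λ̄ ∘ (g + g₀ ∘ λ) = g ∘ λ, g(S) = S̄, and λ̄(g₀(λ(x))) = 0 for every x ∈ F. Suppose f(x) = g(x) + g₀(λ(x)) is a permutation of F and g is a bijection of F with compositional inverse g⁻¹. Then the compositional inverse of f is given by f⁻¹(x) = g⁻¹( x − g₀(g⁻¹(λ̄(x))) ) for all x ∈ F. -/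
/-- Corollary 3.7: Let `F` be a finite field and `S, S̄ ⊆ F` with `#S = #S̄`, with
surjections `λ : F → S`, `λ̄ : F → S̄`, where `λ̄` is additive. Let `g₀ : S → F` and
`g : F → F` satisfy `λ̄ ∘ (g + g₀ ∘ λ) = g ∘ λ`, `g(S) = S̄`, and `λ̄(g₀(λ(x))) = 0`
for all `x`. If `f(x) = g(x) + g₀(λ(x))` is a permutation of `F` and `g` is a bijection
with inverse `g⁻¹`, then `f⁻¹(x) = g⁻¹(x − g₀(g⁻¹(λ̄(x))))`. -/
theorem stmt10 {F : Type*} [Field F] [Fintype F]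
    (S Sb : Set F) (hcard : S.ncard = Sb.ncard)
    (lam lamb : F → F)
    (hlamS : Set.range lam = S) (hlambSb : Set.range lamb = Sb)
    (hadd : ∀ x y : F, lamb (x + y) = lamb x + lamb y)
    (g₀ g : F → F)
    (hcomm : ∀ x : F, lamb (g x + g₀ (lam x)) = g (lam x))
    (hgS : g '' S = Sb)
    (hg₀ : ∀ x : F, lamb (g₀ (lam x)) = 0)
    (f : F → F) (hfdef : ∀ x : F, f x = g x + g₀ (lam x))
    (hf : Function.Bijective f)
    (hg : Function.Bijective g)
    (ginv : F → F)
    (hginv₁ : Function.LeftInverse ginv g) (hginv₂ : Function.RightInverse ginv g)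
    (finv : F → F)
    (hfinv₁ : Function.LeftInverse finv f) (hfinv₂ : Function.RightInverse finv f) :
    ∀ x : F, finv x = ginv (x - g₀ (ginv (lamb x))) := by
  intro x
  have h1 : lamb x = g (lam (finv x)) := by
    conv_lhs => rw [← hfinv₂ x, hfdef, hcomm]
  have h2 : ginv (lamb x) = lam (finv x) := by rw [h1, hginv₁]
  have h3 : g (finv x) = x - g₀ (lam (finv x)) := by
    have h := hfinv₂ x
    rw [hfdef] at h
    exact eq_sub_of_add_eq h
  rw [h2, ← h3, hginv₁]
end

section
/- Let q be a prime power, S ⊆ F_q, and λ : F_q → S a surjective map. Let γ ∈ F_q^* be a b-linear translator with respect to S for λ, i.e., λ(x + uγ) = λ(x) + ub for all x ∈ F_q and all u ∈ S (with b ∈ F_q). Let G : S → S be a map (e.g., induced by a polynomial in F_q[x] mapping S into S). Suppose f(x) = x + γ·G(λ(x)) is a permutation of F_q, so that g(x) = x + b·G(x) permutes S; let g⁻¹ be the compositional inverse of g on S. Then the compositional inverse of f is given by f⁻¹(x) = x − γ·G(g⁻¹(λ(x))) for all x ∈ F_q. -/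
/-- Corollary 3.9: Let `S ⊆ F_q`, `λ : F_q → S` surjective, and `γ ∈ F_q^*` a
`b`-linear translator of `λ` with respect to `S`, i.e. `λ(x + uγ) = λ(x) + ub` for
all `x ∈ F_q`, `u ∈ S`. Let `G` map `S` into `S`. Suppose `f(x) = x + γ·G(λ(x))` is
a permutation of `F_q`, so that `g(x) = x + b·G(x)` permutes `S`, with `g⁻¹` its
compositional inverse on `S`. Then `f⁻¹(x) = x − γ·G(g⁻¹(λ(x)))`. -/
theorem stmt11 {F : Type*} [Field F] [Fintype F]
    (S : Set F) (lam : F → F) (hlamS : Set.range lam = S)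
    (γ b : F) (hγ : γ ≠ 0)
    (htrans : ∀ x : F, ∀ u ∈ S, lam (x + u * γ) = lam x + u * b)
    (G : F → F) (hG : Set.MapsTo G S S)
    (f : F → F) (hfdef : ∀ x : F, f x = x + γ * G (lam x))
    (hf : Function.Bijective f)
    (hgperm : Set.BijOn (fun x : F => x + b * G x) S S)
    (ginv : F → F)
    (hginv : ∀ s ∈ S, ginv (s + b * G s) = s)
    (finv : F → F)
    (hfinv₁ : Function.LeftInverse finv f) (hfinv₂ : Function.RightInverse finv f) :
    ∀ x : F, finv x = x - γ * G (ginv (lam x)) := by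
  intro x
  have hx : lam x ∈ S := hlamS ▸ Set.mem_range_self x
  obtain ⟨t, htS, ht⟩ := hgperm.surjOn hx
  simp only at ht
  have hginvt : ginv (lam x) = t := by rw [← ht, hginv t htS]
  have hGt : G t ∈ S := hG htS
  have hlam : lam (x - γ * G t) = t := by
    have := htrans (x - γ * G t) (G t) hGt
    rw [show x - γ * G t + G t * γ = x by ring] at this
    have h2 : lam (x - γ * G t) = lam x - G t * b := by rw [this]; ring
    rw [h2, ← ht]; ring
  have hfx : f (x - γ * G t) = x := by
    rw [hfdef, hlam]; ring
  rw [hginvt, ← hfx, hfinv₁, hfx]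
end

section
/- Let q be a prime power, ℓ a positive divisor of q−1, s = (q−1)/ℓ, and h ∈ F_q[x]. Suppose f(x) = x^r h(x^s) is a permutation of F_q, so that gcd(r, s) = 1 and g(x) = x^r h(x)^s permutes the group μ_ℓ of ℓ-th roots of unity in F_q^*; let g⁻¹ be the compositional inverse of g on μ_ℓ. Let a and b be integers with a·s + b·r = 1. Then the compositional inverse of f satisfies f⁻¹(x) = g⁻¹(x^s)^a · x^b · h(g⁻¹(x^s))^{−b} for all x ∈ F_q^* (and f⁻¹(0) = 0). -/
/-- Proposition 4.3: Let `F = F_q`, `ℓ ∣ q−1`, `s = (q−1)/ℓ`, `h ∈ F_q[x]`. Suppose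
`f(x) = x^r h(x^s)` permutes `F_q`, so that `gcd(r,s) = 1` and `g(x) = x^r h(x)^s`
permutes `μ_ℓ`, with `g⁻¹` the compositional inverse of `g` on `μ_ℓ`. Let `a, b` be
integers with `a·s + b·r = 1`. Then `f⁻¹(x) = g⁻¹(x^s)^a · x^b · h(g⁻¹(x^s))^{−b}`
for all `x ≠ 0`, and `f⁻¹(0) = 0`. -/
theorem stmt15 {F : Type*} [Field F] [Fintype F]
    (r ℓ s : ℕ) (hℓpos : 0 < ℓ) (hℓdvd : ℓ ∣ Fintype.card F - 1)
    (hs : s = (Fintype.card F - 1) / ℓ)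
    (h : Polynomial F)
    (f : F → F) (hfdef : ∀ x : F, f x = x ^ r * h.eval (x ^ s))
    (hf : Function.Bijective f)
    (hgcdrs : Nat.gcd r s = 1)
    (hgbij : Set.BijOn (fun x : F => x ^ r * (h.eval x) ^ s)
      {x : F | x ^ ℓ = 1} {x : F | x ^ ℓ = 1})
    (ginv : F → F)
    (hginv : ∀ x : F, x ^ ℓ = 1 → ginv (x ^ r * (h.eval x) ^ s) = x)
    (a b : ℤ) (hab : a * (s : ℤ) + b * (r : ℤ) = 1)
    (finv : F → F)
    (hfinv₁ : Function.LeftInverse finv f) (hfinv₂ : Function.RightInverse finv f) :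
    finv 0 = 0 ∧
    ∀ x : F, x ≠ 0 →
      finv x = (ginv (x ^ s)) ^ a * x ^ b * (h.eval (ginv (x ^ s))) ^ (-b) := by
  have hsl : s * ℓ = Fintype.card F - 1 := by
    rw [hs]; exact Nat.div_mul_cancel hℓdvd
  have hf0 : f 0 = 0 := by
    rcases Nat.eq_zero_or_pos r with hr0 | hrpos
    · -- r = 0, so s = gcd 0 s = 1 and ℓ = q - 1
      have hs1 : s = 1 := by simpa [hr0] using hgcdrs
      by_contra hne
      have hmem : (f 0) ∈ {x : F | x ^ ℓ = 1} := by
        have hq : (f 0) ^ (Fintype.card F - 1) = 1 :=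
          FiniteField.pow_card_sub_one_eq_one _ hne
        have : ℓ = Fintype.card F - 1 := by rw [hs1, one_mul] at hsl; omega
        simpa [this] using hq
      obtain ⟨c, hc, hceq⟩ := hgbij.surjOn hmem
      have hc1 : c ^ ℓ = 1 := hc
      have hcne : c ≠ 0 := by
        intro h0; rw [h0] at hc1; simp [hℓpos.ne'] at hc1
      have hfc : f c = f 0 := by
        rw [hfdef]
        simpa [hr0, hs1] using hceq
      have : c = 0 := hf.injective hfc
      exact hcne this
    · rw [hfdef]; simp [hrpos.ne']
  have hfin0 : finv 0 = 0 := by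
    have := hfinv₁ 0
    rwa [hf0] at this
  refine ⟨hfin0, fun x hx => ?_⟩
  set y := finv x with hy
  have hfy : f y = x := hfinv₂ x
  have hy0 : y ≠ 0 := by
    intro h0
    rw [h0, hf0] at hfy
    exact hx hfy.symm
  have hxdef : x = y ^ r * h.eval (y ^ s) := by rw [← hfy, hfdef]
  have hys : (y ^ s) ^ ℓ = 1 := by
    rw [← pow_mul, hsl]
    exact FiniteField.pow_card_sub_one_eq_one _ hy0
  have hgy : ginv (x ^ s) = y ^ s := by
    have hxs : x ^ s = (y ^ s) ^ r * (h.eval (y ^ s)) ^ s := by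
      rw [hxdef, mul_pow, ← pow_mul, ← pow_mul, Nat.mul_comm r s, pow_mul]
    rw [hxs]
    exact hginv _ hys
  have hH : h.eval (y ^ s) ≠ 0 := by
    intro h0
    rw [hxdef, h0, mul_zero] at hx
    exact hx rfl
  rw [hgy]
  set H := h.eval (y ^ s) with hHdef
  have hcalc : (y ^ s) ^ a * x ^ b * H ^ (-b) = y := by
    have hyH : x = y ^ (r : ℤ) * H := by
      rw [hxdef, zpow_natCast]
    rw [hyH, mul_zpow, ← zpow_natCast y s, ← zpow_mul, ← zpow_mul]
    have : y ^ ((s : ℤ) * a) * (y ^ ((r : ℤ) * b) * H ^ b) * H ^ (-b)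
        = (y ^ ((s : ℤ) * a) * y ^ ((r : ℤ) * b)) * (H ^ b * H ^ (-b)) := by ring
    rw [this, ← zpow_add₀ hy0, ← zpow_add₀ hH]
    have h1 : (s : ℤ) * a + (r : ℤ) * b = 1 := by linarith
    rw [h1]
    simp
  rw [hcalc]
end

section
/- Let q be an odd prime power, γ a primitive element of F_q, and a₁, a₂ ∈ F_q^*. Let r₁, r₂ be positive integers and define f : F_q → F_q by f(x) = (a₁/2)·x^{r₁}·(1 − x^{(q−1)/2}) + (a₂/2)·x^{r₂}·(1 + x^{(q−1)/2}); equivalently, f(0) = 0, f(x) = a₁x^{r₁} for x a non-square (x ∈ γ⟨γ²⟩), and f(x) = a₂x^{r₂} for x a nonzero square (x ∈ ⟨γ²⟩). Then f is a permutation of F_q if and only if gcd(r₁r₂, (q−1)/2) = 1 and the pair ((−1)^{r₁}·a₁^{(q−1)/2}, a₂^{(q−1)/2}) satisfies {(−1)^{r₁}·a₁^{(q−1)/2}, a₂^{(q−1)/2}} = {−1, 1} as an unordered pair of elements of F_q. -/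
/-- Lemma 4.4: Let `q` be an odd prime power, `γ` a primitive element of `F_q`,
`a₁, a₂ ∈ F_q^*`, and `r₁, r₂` positive integers. Define
`f(x) = (a₁/2)x^{r₁}(1 − x^{(q−1)/2}) + (a₂/2)x^{r₂}(1 + x^{(q−1)/2})`. Then `f` is a
permutation of `F_q` iff `gcd(r₁r₂, (q−1)/2) = 1` and
`{(−1)^{r₁}a₁^{(q−1)/2}, a₂^{(q−1)/2}} = {−1, 1}`. -/
theorem stmt16 {F : Type*} [Field F] [Fintype F]
    (hodd : Odd (Fintype.card F))
    (γ : Fˣ) (hγ : ∀ x : Fˣ, x ∈ Subgroup.zpowers γ)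
    (a₁ a₂ : F) (ha₁ : a₁ ≠ 0) (ha₂ : a₂ ≠ 0)
    (r₁ r₂ : ℕ) (hr₁ : 0 < r₁) (hr₂ : 0 < r₂)
    (f : F → F)
    (hfdef : ∀ x : F,
      f x = a₁ / 2 * x ^ r₁ * (1 - x ^ ((Fintype.card F - 1) / 2)) +
            a₂ / 2 * x ^ r₂ * (1 + x ^ ((Fintype.card F - 1) / 2))) :
    Function.Bijective f ↔
      (Nat.gcd (r₁ * r₂) ((Fintype.card F - 1) / 2) = 1 ∧
        ({(-1 : F) ^ r₁ * a₁ ^ ((Fintype.card F - 1) / 2),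
            a₂ ^ ((Fintype.card F - 1) / 2)} : Set F) = {-1, 1}) := by
  classical
  set q := Fintype.card F with hq
  set s := (q - 1) / 2 with hs
  have hqmod : q % 2 = 1 := Nat.odd_iff.mp hodd
  have hq2 : 2 ≤ q := Fintype.one_lt_card
  have hq3 : 3 ≤ q := by omega
  have hqs : q - 1 = 2 * s := by omega
  have hs0 : s ≠ 0 := by omega
  -- characteristic is not 2
  have hchar2 : ringChar F ≠ 2 := by
    intro h
    have := FiniteField.even_card_of_char_two h
    omega
  have hne : (-1 : F) ≠ 1 := Ring.neg_one_ne_one_of_char_ne_two hchar2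
  have h2ne : (2 : F) ≠ 0 := by
    intro h; apply hne; linear_combination -h
  -- order of γ
  have hordγ : orderOf γ = q - 1 := by
    rw [orderOf_eq_card_of_forall_mem_zpowers hγ, Nat.card_eq_fintype_card,
      Fintype.card_units]
  have hγne : (γ : F) ≠ 0 := Units.ne_zero γ
  -- x^(q-1) = 1 for x ≠ 0
  have hpow : ∀ c : F, c ≠ 0 → c ^ (2 * s) = 1 := by
    intro c hc
    rw [← hqs]
    exact FiniteField.pow_card_sub_one_eq_one c hc
  -- dichotomy for the character
  have hchi : ∀ c : F, c ≠ 0 → c ^ s = 1 ∨ c ^ s = -1 := by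
    intro c hc
    have h1 : (c ^ s) * (c ^ s) = 1 := by
      rw [← pow_add]
      have h2 : s + s = 2 * s := by ring
      rw [h2]
      exact hpow c hc
    exact mul_self_eq_one_iff.mp h1
  -- γ^s = -1
  have hγs : (γ : F) ^ s = -1 := by
    rcases hchi γ hγne with h | h
    · exfalso
      have h1 : (γ ^ s : Fˣ) = 1 := Units.ext (by simpa using h)
      have h2 := orderOf_dvd_of_pow_eq_one h1
      rw [hordγ] at h2
      have := Nat.le_of_dvd (by omega) h2
      omega
    · exact h
  -- values of f
  have hf0 : f 0 = 0 := by
    rw [hfdef]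
    simp [zero_pow hr₁.ne', zero_pow hr₂.ne', zero_pow hs0]
  have hfN : ∀ x : F, x ^ s = -1 → f x = a₁ * x ^ r₁ := by
    intro x hx
    rw [hfdef x, hx]
    have h1 : (1 : F) - -1 = 2 := by ring
    have h2 : (1 : F) + -1 = 0 := by ring
    rw [h1, h2, mul_zero, add_zero, div_mul_eq_mul_div, div_mul_eq_mul_div,
      div_eq_iff h2ne]
  have hfS : ∀ x : F, x ^ s = 1 → f x = a₂ * x ^ r₂ := by
    intro x hx
    rw [hfdef x, hx]
    have h1 : (1 : F) - 1 = 0 := by ring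
    have h2 : (1 : F) + 1 = 2 := by ring
    rw [h1, h2, mul_zero, zero_add, div_mul_eq_mul_div, div_mul_eq_mul_div,
      div_eq_iff h2ne]
  have hchiN : ∀ x : F, x ^ s = -1 → (f x) ^ s = (-1 : F) ^ r₁ * a₁ ^ s := by
    intro x hx
    rw [hfN x hx, mul_pow, ← pow_mul, mul_comm r₁ s, pow_mul, hx, mul_comm]
  have hchiS : ∀ x : F, x ^ s = 1 → (f x) ^ s = a₂ ^ s := by
    intro x hx
    rw [hfS x hx, mul_pow, ← pow_mul, mul_comm r₂ s, pow_mul, hx, one_pow, mul_one]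
  -- signs
  have hε₂pm : a₂ ^ s = 1 ∨ a₂ ^ s = -1 := hchi a₂ ha₂
  have hε₁pm : (-1 : F) ^ r₁ * a₁ ^ s = 1 ∨ (-1 : F) ^ r₁ * a₁ ^ s = -1 := by
    rcases neg_one_pow_eq_or F r₁ with h1 | h1 <;> rcases hchi a₁ ha₁ with h2 | h2 <;>
      rw [h1, h2] <;> norm_num
  have hε₂ne : a₂ ^ s ≠ 0 := pow_ne_zero s ha₂
  -- set condition iff distinct
  have hsetiff : ({(-1 : F) ^ r₁ * a₁ ^ s, a₂ ^ s} : Set F) = {-1, 1} ↔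
      (-1 : F) ^ r₁ * a₁ ^ s ≠ a₂ ^ s := by
    constructor
    · intro h hEq
      rw [hEq] at h
      have h1 : (-1 : F) ∈ ({a₂ ^ s, a₂ ^ s} : Set F) := by rw [h]; left; rfl
      have h2 : (1 : F) ∈ ({a₂ ^ s, a₂ ^ s} : Set F) := by rw [h]; right; rfl
      simp only [Set.mem_insert_iff, Set.mem_singleton_iff, or_self] at h1 h2
      exact hne (h1.trans h2.symm)
    · intro h
      rcases hε₁pm with h1 | h1 <;> rcases hε₂pm with h2 | h2 <;> rw [h1, h2] at h ⊢
      · exact absurd rfl h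
      · rw [Set.pair_comm]
      · exact absurd rfl h
  -- cancellation lemma
  have hcancel : ∀ (r : ℕ) (x y : F), Nat.Coprime r s → y ≠ 0 →
      x ^ s = y ^ s → x ^ r = y ^ r → x = y := by
    intro r x y hco hy hxs hxr
    have hys : (y : F) ^ s ≠ 0 := pow_ne_zero s hy
    have hyr : (y : F) ^ r ≠ 0 := pow_ne_zero r hy
    have h1 : (x * y⁻¹) ^ s = 1 := by
      rw [mul_pow, inv_pow, hxs, mul_inv_cancel₀ hys]
    have h2 : (x * y⁻¹) ^ r = 1 := by
      rw [mul_pow, inv_pow, hxr, mul_inv_cancel₀ hyr]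
    have hd1 : orderOf (x * y⁻¹) ∣ r := orderOf_dvd_of_pow_eq_one h2
    have hd2 : orderOf (x * y⁻¹) ∣ s := orderOf_dvd_of_pow_eq_one h1
    have hd : orderOf (x * y⁻¹) ∣ 1 := hco ▸ Nat.dvd_gcd hd1 hd2
    have ho : orderOf (x * y⁻¹) = 1 := Nat.dvd_one.mp hd
    have h3 : x * y⁻¹ = 1 := orderOf_eq_one_iff.mp ho
    rw [← div_eq_mul_inv] at h3
    exact (div_eq_one_iff_eq hy).mp h3
  constructor
  · -- bijective → conditions
    intro hbij
    -- distinct signs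
    have hdist : (-1 : F) ^ r₁ * a₁ ^ s ≠ a₂ ^ s := by
      intro hEq
      -- all nonzero values of f have the same character value a₂^s
      have hall : ∀ x : F, x ≠ 0 → (f x) ^ s = a₂ ^ s := by
        intro x hx
        rcases hchi x hx with h | h
        · exact hchiS x h
        · rw [hchiN x h]; exact hEq
      rcases hε₂pm with h2 | h2
      · -- a₂^s = 1 : γ is not in the range
        obtain ⟨x, hx⟩ := hbij.2 (γ : F)
        by_cases hx0 : x = 0
        · rw [hx0, hf0] at hx; exact hγne hx.symm
        · have := hall x hx0
          rw [hx, hγs, h2] at this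
          exact hne this
      · -- a₂^s = -1 : 1 is not in the range
        obtain ⟨x, hx⟩ := hbij.2 (1 : F)
        by_cases hx0 : x = 0
        · rw [hx0, hf0] at hx; exact one_ne_zero hx.symm
        · have := hall x hx0
          rw [hx, one_pow, h2] at this
          exact hne this.symm
    -- coprimality of r₁ with s
    have hco1 : Nat.Coprime r₁ s := by
      by_contra hd1
      set d := Nat.gcd r₁ s with hd
      have hds : d ∣ s := Nat.gcd_dvd_right r₁ s
      have hdr : d ∣ r₁ := Nat.gcd_dvd_left r₁ s
      have hd0 : d ≠ 0 := fun h => hs0 (Nat.eq_zero_of_gcd_eq_zero_right h)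
      have hdne1 : d ≠ 1 := hd1
      have hd2 : 2 ≤ d := by omega
      obtain ⟨m, hm⟩ := hds
      obtain ⟨k, hk⟩ := hdr
      have hm1 : 1 ≤ m :=
        Nat.pos_of_ne_zero (by rintro rfl; rw [mul_zero] at hm; exact hs0 hm)
      have hmlt : m < s := by
        have : 2 * m ≤ d * m := Nat.mul_le_mul_right m hd2
        omega
      set x : F := (γ : F) with hxdef
      set y : F := (γ : F) ^ (1 + 2 * m) with hydef
      have hys : y ^ s = -1 := by
        rw [hydef, ← pow_mul]
        have he : (1 + 2 * m) * s = s + (2 * s) * m := by ring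
        rw [he, pow_add, hγs, pow_mul, hpow (γ : F) hγne, one_pow, mul_one]
      have hyr : y ^ r₁ = x ^ r₁ := by
        rw [hydef, hxdef, ← pow_mul]
        have he : (1 + 2 * m) * r₁ = r₁ + (2 * s) * k := by
          rw [hm, hk]; ring
        rw [he, pow_add, pow_mul, hpow (γ : F) hγne, one_pow, mul_one]
      have hfeq : f x = f y := by
        rw [hfN x hγs, hfN y hys, hyr]
      have hxy := hbij.1 hfeq
      -- but x ≠ y
      apply absurd hxy
      rw [hxdef, hydef]
      intro hc
      have h1 : (γ : Fˣ) = γ ^ (1 + 2 * m) := Units.ext (by simpa using hc)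
      have h2 : (γ : Fˣ) ^ (2 * m) = 1 := by
        rw [pow_add, pow_one] at h1
        have h5 : γ * (1 : Fˣ) = γ * γ ^ (2 * m) := by rw [mul_one, ← h1]
        exact (mul_left_cancel h5).symm
      have h3 := orderOf_dvd_of_pow_eq_one h2
      rw [hordγ] at h3
      have := Nat.le_of_dvd (by omega) h3
      omega
    -- coprimality of r₂ with s
    have hco2 : Nat.Coprime r₂ s := by
      by_contra hd1
      set d := Nat.gcd r₂ s with hd
      have hds : d ∣ s := Nat.gcd_dvd_right r₂ s
      have hdr : d ∣ r₂ := Nat.gcd_dvd_left r₂ s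
      have hd0 : d ≠ 0 := fun h => hs0 (Nat.eq_zero_of_gcd_eq_zero_right h)
      have hdne1 : d ≠ 1 := hd1
      have hd2 : 2 ≤ d := by omega
      obtain ⟨m, hm⟩ := hds
      obtain ⟨k, hk⟩ := hdr
      have hm1 : 1 ≤ m :=
        Nat.pos_of_ne_zero (by rintro rfl; rw [mul_zero] at hm; exact hs0 hm)
      have hmlt : m < s := by
        have : 2 * m ≤ d * m := Nat.mul_le_mul_right m hd2
        omega
      set y : F := (γ : F) ^ (2 * m) with hydef
      have hys : y ^ s = 1 := by
        rw [hydef, ← pow_mul]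
        have he : (2 * m) * s = (2 * s) * m := by ring
        rw [he, pow_mul, hpow (γ : F) hγne, one_pow]
      have hyr : y ^ r₂ = 1 := by
        rw [hydef, ← pow_mul]
        have he : (2 * m) * r₂ = (2 * s) * k := by rw [hm, hk]; ring
        rw [he, pow_mul, hpow (γ : F) hγne, one_pow]
      have hfeq : f (1 : F) = f y := by
        rw [hfS (1 : F) (one_pow s), hfS y hys, hyr, one_pow]
      have hxy := hbij.1 hfeq
      apply absurd hxy.symm
      rw [hydef]
      intro hc
      have h2 : (γ : Fˣ) ^ (2 * m) = 1 := Units.ext (by simpa using hc)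
      have h3 := orderOf_dvd_of_pow_eq_one h2
      rw [hordγ] at h3
      have := Nat.le_of_dvd (by omega) h3
      omega
    exact ⟨Nat.Coprime.mul hco1 hco2, hsetiff.mpr hdist⟩
  · -- conditions → bijective
    rintro ⟨hgcd, hset⟩
    have hdist := hsetiff.mp hset
    have hco1 : Nat.Coprime r₁ s :=
      Nat.Coprime.coprime_dvd_left (dvd_mul_right r₁ r₂) hgcd
    have hco2 : Nat.Coprime r₂ s :=
      Nat.Coprime.coprime_dvd_left (dvd_mul_left r₂ r₁) hgcd
    have hinj : Function.Injective f := by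
      intro x y hfxy
      by_cases hx0 : x = 0 <;> by_cases hy0 : y = 0
      · rw [hx0, hy0]
      · exfalso
        rw [hx0, hf0] at hfxy
        rcases hchi y hy0 with h | h
        · rw [hfS y h] at hfxy
          exact mul_ne_zero ha₂ (pow_ne_zero r₂ hy0) hfxy.symm
        · rw [hfN y h] at hfxy
          exact mul_ne_zero ha₁ (pow_ne_zero r₁ hy0) hfxy.symm
      · exfalso
        rw [hy0, hf0] at hfxy
        rcases hchi x hx0 with h | h
        · rw [hfS x h] at hfxy
          exact mul_ne_zero ha₂ (pow_ne_zero r₂ hx0) hfxy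
        · rw [hfN x h] at hfxy
          exact mul_ne_zero ha₁ (pow_ne_zero r₁ hx0) hfxy
      · rcases hchi x hx0 with hx1 | hx1 <;> rcases hchi y hy0 with hy1 | hy1
        · -- both squares
          have h1 : a₂ * x ^ r₂ = a₂ * y ^ r₂ := by
            rw [← hfS x hx1, ← hfS y hy1, hfxy]
          have h2 : x ^ r₂ = y ^ r₂ := mul_left_cancel₀ ha₂ h1
          exact hcancel r₂ x y hco2 hy0 (hx1.trans hy1.symm) h2
        · exfalso
          have h1 := hchiS x hx1
          have h2 := hchiN y hy1
          rw [hfxy, h2] at h1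
          exact hdist h1
        · exfalso
          have h1 := hchiN x hx1
          have h2 := hchiS y hy1
          rw [hfxy, h2] at h1
          exact hdist h1.symm
        · have h1 : a₁ * x ^ r₁ = a₁ * y ^ r₁ := by
            rw [← hfN x hx1, ← hfN y hy1, hfxy]
          have h2 : x ^ r₁ = y ^ r₁ := mul_left_cancel₀ ha₁ h1
          exact hcancel r₁ x y hco1 hy0 (hx1.trans hy1.symm) h2
    exact (Finite.injective_iff_bijective).mp hinj
end

section
/- Let q be an odd prime power, γ a primitive element of F_q, a₁, a₂ ∈ F_q^*, and r₁, r₂ positive integers. Define f : F_q → F_q by f(0) = 0, f(x) = a₁x^{r₁} for x a non-square in F_q^*, and f(x) = a₂x^{r₂} for x a nonzero square. Then: (i) if r₁ is odd, f is a permutation of F_q if and only if gcd(r₁r₂, (q−1)/2) = 1 and a₁a₂ is a nonzero square in F_q; (ii) if r₁ is even, f is a permutation of F_q if and only if gcd(r₁r₂, (q−1)/2) = 1 and a₁a₂ is a non-square in F_q. -/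
lemma aux_root17 {F : Type*} [Field F] {m r : ℕ} {x : F} (hx : x ^ m = 1)
    (hxr : x ^ r = 1) (h : Nat.Coprime r m) : x = 1 := by
  have h1 : orderOf x ∣ r := orderOf_dvd_of_pow_eq_one hxr
  have h2 : orderOf x ∣ m := orderOf_dvd_of_pow_eq_one hx
  have h3 : orderOf x ∣ 1 := h ▸ Nat.dvd_gcd h1 h2
  rw [Nat.dvd_one] at h3
  exact orderOf_eq_one_iff.mp h3


/-- Corollary 4.5: Let `q` be an odd prime power, `γ` a primitive element of `F_q`,
`a₁, a₂ ∈ F_q^*`, `r₁, r₂` positive integers, and define `f(0) = 0`,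
`f(x) = a₁x^{r₁}` for `x` a non-square in `F_q^*`, `f(x) = a₂x^{r₂}` for `x` a
nonzero square. Then: (i) if `r₁` is odd, `f` is a permutation of `F_q` iff
`gcd(r₁r₂, (q−1)/2) = 1` and `a₁a₂` is a nonzero square; (ii) if `r₁` is even, `f`
is a permutation of `F_q` iff `gcd(r₁r₂, (q−1)/2) = 1` and `a₁a₂` is a non-square. -/
theorem stmt17 {F : Type*} [Field F] [Fintype F]
    (hodd : Odd (Fintype.card F))
    (γ : Fˣ) (hγ : ∀ x : Fˣ, x ∈ Subgroup.zpowers γ)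
    (a₁ a₂ : F) (ha₁ : a₁ ≠ 0) (ha₂ : a₂ ≠ 0)
    (r₁ r₂ : ℕ) (hr₁ : 0 < r₁) (hr₂ : 0 < r₂)
    (f : F → F)
    (hf0 : f 0 = 0)
    (hfns : ∀ x : F, x ≠ 0 → ¬(∃ y : F, y ≠ 0 ∧ x = y ^ 2) → f x = a₁ * x ^ r₁)
    (hfs : ∀ x : F, x ≠ 0 → (∃ y : F, y ≠ 0 ∧ x = y ^ 2) → f x = a₂ * x ^ r₂) :
    (Odd r₁ →
      (Function.Bijective f ↔
        (Nat.gcd (r₁ * r₂) ((Fintype.card F - 1) / 2) = 1 ∧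
          ∃ y : F, y ≠ 0 ∧ a₁ * a₂ = y ^ 2))) ∧
    (Even r₁ →
      (Function.Bijective f ↔
        (Nat.gcd (r₁ * r₂) ((Fintype.card F - 1) / 2) = 1 ∧
          ¬∃ y : F, y ≠ 0 ∧ a₁ * a₂ = y ^ 2))) := by
  classical
  set q := Fintype.card F with hq
  have hq2 : 1 < q := Fintype.one_lt_card
  obtain ⟨k, hk⟩ := hodd
  have hq3 : 3 ≤ q := by omega
  set m := (q - 1) / 2 with hmdef
  have hm2 : 2 * m = q - 1 := by omega
  have hm1 : 1 ≤ m := by omega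
  have hchar : ringChar F ≠ 2 := by
    intro h
    have := (FiniteField.even_card_iff_char_two (F := F)).mp h
    omega
  have hne : (-1 : F) ≠ 1 := Ring.neg_one_ne_one_of_char_ne_two hchar
  have hpow1 : ∀ x : F, x ≠ 0 → x ^ (q - 1) = 1 := fun x hx =>
    FiniteField.pow_card_sub_one_eq_one x hx
  have hpm : ∀ x : F, x ≠ 0 → x ^ m * x ^ m = 1 := by
    intro x hx
    rw [← pow_add]
    have : m + m = q - 1 := by omega
    rw [this]; exact hpow1 x hx
  have hdich : ∀ x : F, x ≠ 0 → x ^ m = 1 ∨ x ^ m = -1 := by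
    intro x hx
    exact mul_self_eq_one_iff.mp (hpm x hx)
  have hsq : ∀ x : F, x ≠ 0 → ((∃ y : F, y ≠ 0 ∧ x = y ^ 2) ↔ x ^ m = 1) := by
    intro x hx
    constructor
    · rintro ⟨y, hy, rfl⟩
      rw [← pow_mul]
      have : 2 * m = q - 1 := hm2
      rw [this]; exact hpow1 y hy
    · intro hxm
      have hq2' : q / 2 = m := by omega
      have : IsSquare x := by
        rw [FiniteField.isSquare_iff hchar hx, ← hq, hq2']
        exact hxm
      obtain ⟨r, hr⟩ := this
      have hr0 : r ≠ 0 := by rintro rfl; simp at hr; exact hx hr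
      exact ⟨r, hr0, by rw [hr, sq]⟩
  have hnsq : ∀ x : F, x ≠ 0 → ((¬∃ y : F, y ≠ 0 ∧ x = y ^ 2) ↔ x ^ m = -1) := by
    intro x hx
    rw [hsq x hx]
    rcases hdich x hx with h | h <;> simp [h, hne, hne.symm]
  have hγ0 : (γ : F) ≠ 0 := Units.ne_zero γ
  have horder : orderOf γ = q - 1 := by
    rw [orderOf_eq_card_of_forall_mem_zpowers hγ, Nat.card_units,
      Nat.card_eq_fintype_card]
  have hγpow : ∀ k : ℕ, (γ : F) ^ k = 1 → (q - 1) ∣ k := by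
    intro k hk
    have : γ ^ k = 1 := by
      ext; rw [Units.val_pow_eq_pow_val]; simpa using hk
    rw [← horder]
    exact orderOf_dvd_of_pow_eq_one this
  have hγm : (γ : F) ^ m = -1 := by
    rcases hdich (γ : F) hγ0 with h | h
    · exfalso
      have := hγpow m h
      have := Nat.le_of_dvd hm1 this
      omega
    · exact h
  have hfval : ∀ x : F, x ≠ 0 →
      (x ^ m = 1 ∧ f x = a₂ * x ^ r₂) ∨ (x ^ m = -1 ∧ f x = a₁ * x ^ r₁) := by
    intro x hx
    rcases hdich x hx with h | h
    · exact Or.inl ⟨h, hfs x hx ((hsq x hx).mpr h)⟩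
    · exact Or.inr ⟨h, hfns x hx ((hnsq x hx).mpr h)⟩
  have hfne : ∀ x : F, x ≠ 0 → f x ≠ 0 := by
    intro x hx
    rcases hfval x hx with ⟨_, h⟩ | ⟨_, h⟩ <;> rw [h] <;>
      exact mul_ne_zero (by assumption) (pow_ne_zero _ hx)
  have hno : ∀ c : F, c = 1 ∨ c = -1 → -c ≠ c := by
    rintro c (rfl | rfl)
    · exact fun h => hne h
    · intro h; rw [neg_neg] at h; exact hne h.symm
  -- construction of a nontrivial square root of unity from a common prime factor
  have hconstr : ∀ p : ℕ, Nat.Prime p → p ∣ m →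
      ∃ s : F, s ≠ 1 ∧ s ^ m = 1 ∧ (∃ y : F, y ≠ 0 ∧ s = y ^ 2) ∧
        (∀ r : ℕ, p ∣ r → s ^ r = 1) := by
    intro p hp hpm'
    obtain ⟨mp, hmp⟩ := hpm'
    have hmp0 : 0 < mp := by
      rcases Nat.eq_zero_or_pos mp with rfl | h
      · omega
      · exact h
    refine ⟨(γ : F) ^ (2 * mp), ?_, ?_, ?_, ?_⟩
    · intro h
      have hd := Nat.le_of_dvd (by omega) (hγpow _ h)
      have h2 : 2 * mp ≤ m := by
        calc 2 * mp ≤ p * mp := Nat.mul_le_mul_right _ hp.two_le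
        _ = m := hmp.symm
      omega
    · rw [← pow_mul]
      have e : 2 * mp * m = (q - 1) * mp := by rw [← hm2]; ring
      rw [e, pow_mul]
      rw [hpow1 (γ : F) hγ0, one_pow]
    · exact ⟨(γ : F) ^ mp, pow_ne_zero _ hγ0, by rw [← pow_mul, mul_comm]⟩
    · rintro r ⟨rp, rfl⟩
      rw [← pow_mul]
      have e : 2 * mp * (p * rp) = (q - 1) * rp := by
        rw [← hm2, hmp]; ring
      rw [e, pow_mul, hpow1 (γ : F) hγ0, one_pow]
  have hone_sq : ∃ y : F, y ≠ 0 ∧ (1 : F) = y ^ 2 := ⟨1, one_ne_zero, by ring⟩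
  have key : Function.Bijective f ↔
      (Nat.Coprime (r₁ * r₂) m ∧ (a₁ * a₂) ^ m = (-1) ^ (r₁ + 1)) := by
    constructor
    · rintro ⟨hinj, hsurj⟩
      have hcop : Nat.Coprime (r₁ * r₂) m := by
        rw [Nat.coprime_mul_iff_left]
        constructor
        · -- Coprime r₁ m
          by_contra hc
          obtain ⟨p, hp, hpr, hpm'⟩ := Nat.Prime.not_coprime_iff_dvd.mp hc
          obtain ⟨s, hs1, hsm, hssq, hsr⟩ := hconstr p hp hpm'
          have hs0 : s ≠ 0 := by
            obtain ⟨y, hy, rfl⟩ := hssq; exact pow_ne_zero _ hy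
          have hns : ((γ : F) * s) ^ m = -1 := by
            rw [mul_pow, hγm, hsm, mul_one]
          have hγs0 : (γ : F) * s ≠ 0 := mul_ne_zero hγ0 hs0
          have h1 : f ((γ : F) * s) = a₁ * (γ : F) ^ r₁ := by
            rw [hfns _ hγs0 ((hnsq _ hγs0).mpr hns), mul_pow, hsr r₁ hpr, mul_one]
          have h2 : f (γ : F) = a₁ * (γ : F) ^ r₁ := by
            rw [hfns _ hγ0 ((hnsq _ hγ0).mpr hγm)]
          have := hinj (h1.trans h2.symm)
          have : s = 1 := by
            have h3 : (γ : F) * s = (γ : F) * 1 := by rw [mul_one]; exact this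
            exact mul_left_cancel₀ hγ0 h3
          exact hs1 this
        · -- Coprime r₂ m
          by_contra hc
          obtain ⟨p, hp, hpr, hpm'⟩ := Nat.Prime.not_coprime_iff_dvd.mp hc
          obtain ⟨s, hs1, hsm, hssq, hsr⟩ := hconstr p hp hpm'
          have hs0 : s ≠ 0 := by
            obtain ⟨y, hy, rfl⟩ := hssq; exact pow_ne_zero _ hy
          have h1 : f s = a₂ := by
            rw [hfs _ hs0 hssq, hsr r₂ hpr, mul_one]
          have h2 : f 1 = a₂ := by
            rw [hfs _ one_ne_zero hone_sq, one_pow, mul_one]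
          exact hs1 (hinj (h1.trans h2.symm))
      refine ⟨hcop, ?_⟩
      by_contra hcon
      have ha12 : (a₁ * a₂) ^ m = (-1 : F) ^ r₁ := by
        rcases hdich (a₁ * a₂) (mul_ne_zero ha₁ ha₂) with h | h <;>
          rcases Nat.even_or_odd r₁ with he | he
        · rw [h, he.neg_one_pow]
        · exfalso; apply hcon; rw [h, pow_succ, he.neg_one_pow]; ring
        · exfalso; apply hcon; rw [h, pow_succ, he.neg_one_pow]; ring
        · rw [h, he.neg_one_pow]
      have ha1m : a₁ ^ m * (-1 : F) ^ r₁ = a₂ ^ m := by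
        have h1 : a₁ ^ m * a₂ ^ m = (-1 : F) ^ r₁ := by rw [← mul_pow]; exact ha12
        have h2 : a₂ ^ m * a₂ ^ m = 1 := hpm a₂ ha₂
        calc a₁ ^ m * (-1 : F) ^ r₁ = a₁ ^ m * (a₁ ^ m * a₂ ^ m) := by rw [h1]
        _ = (a₁ ^ m * a₁ ^ m) * a₂ ^ m := by ring
        _ = a₂ ^ m := by rw [hpm a₁ ha₁, one_mul]
      -- z = γ * a₂ has no preimage
      obtain ⟨x, hx⟩ := hsurj ((γ : F) * a₂)
      have hz0 : (γ : F) * a₂ ≠ 0 := mul_ne_zero hγ0 ha₂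
      have hx0 : x ≠ 0 := by
        rintro rfl; rw [hf0] at hx; exact hz0 hx.symm
      have hzm : ((γ : F) * a₂) ^ m = -(a₂ ^ m) := by
        rw [mul_pow, hγm, neg_one_mul]
      have hfxm : (f x) ^ m = a₂ ^ m := by
        rcases hfval x hx0 with ⟨hxm, hfx⟩ | ⟨hxm, hfx⟩
        · rw [hfx, mul_pow, ← pow_mul, mul_comm r₂ m, pow_mul, hxm, one_pow, mul_one]
        · rw [hfx, mul_pow, ← pow_mul, mul_comm r₁ m, pow_mul, hxm]
          exact ha1m
      rw [hx, hzm] at hfxm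
      exact hno (a₂ ^ m) (hdich a₂ ha₂) hfxm
    · rintro ⟨hcop, hpar⟩
      obtain ⟨hcop1, hcop2⟩ := Nat.coprime_mul_iff_left.mp hcop
      have hsq1 : ((-1 : F)) ^ r₁ * ((-1 : F)) ^ r₁ = 1 := by
        rw [← pow_add]; exact (Even.neg_one_pow ⟨r₁, rfl⟩)
      have ha1m : a₁ ^ m * (-1 : F) ^ r₁ = -(a₂ ^ m) := by
        have h1 : a₁ ^ m * a₂ ^ m = (-1 : F) ^ (r₁ + 1) := by rw [← mul_pow]; exact hpar
        have hA : a₁ ^ m = -((-1 : F) ^ r₁ * a₂ ^ m) := by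
          have h2 : a₁ ^ m * (a₂ ^ m * a₂ ^ m) = (-1 : F) ^ (r₁ + 1) * a₂ ^ m := by
            rw [← mul_assoc, h1]
          rw [hpm a₂ ha₂, mul_one] at h2
          rw [h2, pow_succ]; ring
        rw [hA, neg_mul]
        congr 1
        rw [mul_comm ((-1 : F) ^ r₁) (a₂ ^ m), mul_assoc, hsq1, mul_one]
      apply Finite.injective_iff_bijective.mp
      intro x y hxy
      by_cases hx0 : x = 0
      · subst hx0
        by_contra hy0
        exact hfne y (Ne.symm hy0) (by rw [← hxy, hf0])
      by_cases hy0 : y = 0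
      · subst hy0
        exact absurd (by rw [hxy, hf0]) (hfne x hx0)
      have hcancel : ∀ r : ℕ, Nat.Coprime r m → x ^ m = y ^ m → x ^ r = y ^ r → x = y := by
        intro r hcr hm' hr'
        have hu1 : (x * y⁻¹) ^ m = 1 := by
          rw [mul_pow, inv_pow, hm', mul_inv_cancel₀ (pow_ne_zero _ hy0)]
        have hu2 : (x * y⁻¹) ^ r = 1 := by
          rw [mul_pow, inv_pow, hr', mul_inv_cancel₀ (pow_ne_zero _ hy0)]
        exact (mul_inv_eq_one₀ hy0).mp (aux_root17 hu1 hu2 hcr)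
      have hcontra : ∀ u v : F, f u = f v → u ^ m = 1 → v ^ m = -1 →
          f u = a₂ * u ^ r₂ → f v = a₁ * v ^ r₁ → False := by
        intro u v huv hum hvm hfu hfv
        have h1 : (f u) ^ m = a₂ ^ m := by
          rw [hfu, mul_pow, ← pow_mul, mul_comm r₂ m, pow_mul, hum, one_pow, mul_one]
        have h2 : (f v) ^ m = -(a₂ ^ m) := by
          rw [hfv, mul_pow, ← pow_mul, mul_comm r₁ m, pow_mul, hvm]
          exact ha1m
        rw [huv, h2] at h1
        exact hno (a₂ ^ m) (hdich a₂ ha₂) h1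
      rcases hfval x hx0 with ⟨hxm, hfx⟩ | ⟨hxm, hfx⟩ <;>
        rcases hfval y hy0 with ⟨hym, hfy⟩ | ⟨hym, hfy⟩
      · -- both squares
        apply hcancel r₂ hcop2 (by rw [hxm, hym])
        rw [hfx, hfy] at hxy
        exact mul_left_cancel₀ ha₂ hxy
      · exact (hcontra x y hxy hxm hym hfx hfy).elim
      · exact (hcontra y x hxy.symm hym hxm hfy hfx).elim
      · -- both nonsquares
        apply hcancel r₁ hcop1 (by rw [hxm, hym])
        rw [hfx, hfy] at hxy
        exact mul_left_cancel₀ ha₁ hxy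
  have htrans : Nat.gcd (r₁ * r₂) m = 1 ↔ Nat.Coprime (r₁ * r₂) m := Iff.rfl
  constructor
  · intro hodd1
    rw [key]
    have he : ((-1 : F)) ^ (r₁ + 1) = 1 := (Odd.add_one hodd1).neg_one_pow
    rw [he, ← hsq (a₁ * a₂) (mul_ne_zero ha₁ ha₂)]
  · intro heven1
    rw [key]
    have he : ((-1 : F)) ^ (r₁ + 1) = -1 := by
      rw [pow_succ, heven1.neg_one_pow, one_mul]
    rw [he, ← hnsq (a₁ * a₂) (mul_ne_zero ha₁ ha₂)]
end

section
/- Let q be an odd prime power and γ a primitive element of F_q. Consider the set of all bijections f : F_q → F_q of the form: f(0) = 0, f(x) = a₁x^{r₁} for x a non-square in F_q^*, f(x) = a₂x^{r₂} for x a nonzero square, where a₁, a₂ ∈ F_q^* and r₁, r₂ are integers with 1 ≤ r₁, r₂ ≤ q−1. The number of distinct such permutations of F_q equals (q−1)²·φ((q−1)/2)² / 2, where φ is Euler's totient function. -/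
open Finset

section Stmt18Aux

variable {F : Type*} [Field F] [Fintype F]

private lemma st18_char_ne_two (hodd : Odd (Fintype.card F)) : ringChar F ≠ 2 := by
  intro h
  have h2 := FiniteField.even_card_of_char_two (F := F) h
  rw [Nat.odd_iff] at hodd
  omega

private lemma st18_card_ge_three (hodd : Odd (Fintype.card F)) : 3 ≤ Fintype.card F := by
  have h1 : 1 < Fintype.card F := Fintype.one_lt_card
  rw [Nat.odd_iff] at hodd
  omega

private lemma st18_two_mul_m (hodd : Odd (Fintype.card F)) :
    2 * ((Fintype.card F - 1) / 2) = Fintype.card F - 1 := by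
  rw [Nat.odd_iff] at hodd
  have h1 : 1 < Fintype.card F := Fintype.one_lt_card
  omega

private lemma st18_card_div_two (hodd : Odd (Fintype.card F)) :
    Fintype.card F / 2 = (Fintype.card F - 1) / 2 := by
  rw [Nat.odd_iff] at hodd
  omega

private lemma st18_sq_iff (hodd : Odd (Fintype.card F)) {x : F} (hx : x ≠ 0) :
    IsSquare x ↔ x ^ ((Fintype.card F - 1) / 2) = 1 := by
  rw [← st18_card_div_two hodd]
  exact FiniteField.isSquare_iff (st18_char_ne_two hodd) hx

private lemma st18_nonsq_pow (hodd : Odd (Fintype.card F)) {x : F} (hx : x ≠ 0)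
    (hns : ¬ IsSquare x) : x ^ ((Fintype.card F - 1) / 2) = -1 := by
  rcases FiniteField.pow_dichotomy (st18_char_ne_two hodd) hx with h | h
  · exact absurd ((st18_sq_iff hodd hx).mpr (by rwa [← st18_card_div_two hodd])) hns
  · rwa [← st18_card_div_two hodd]

private lemma st18_one_ne_neg_one (hodd : Odd (Fintype.card F)) : (1 : F) ≠ -1 :=
  fun h => Ring.neg_one_ne_one_of_char_ne_two (st18_char_ne_two hodd) h.symm

private lemma st18_mul_sq_iff (hodd : Odd (Fintype.card F)) {x u : F} (hx : x ≠ 0)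
    (hu : u ≠ 0) (hsu : IsSquare u) : IsSquare (x * u) ↔ IsSquare x := by
  rw [st18_sq_iff hodd (mul_ne_zero hx hu), st18_sq_iff hodd hx, mul_pow,
    (st18_sq_iff hodd hu).mp hsu, mul_one]

private lemma st18_pow_mod {t : F} {m : ℕ} (hm : t ^ m = 1) (n : ℕ) :
    t ^ n = t ^ (n % m) := by
  conv_lhs => rw [← Nat.div_add_mod n m]
  rw [pow_add, pow_mul, hm, one_pow, one_mul]

private lemma st18_pow_inj {t₁ t₂ : F} {m s : ℕ} (hm : 1 ≤ m) (hc : Nat.Coprime s m)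
    (h₁ : t₁ ^ m = 1) (h₂ : t₂ ^ m = 1) (h : t₁ ^ s = t₂ ^ s) : t₁ = t₂ := by
  rcases eq_or_lt_of_le hm with hm1 | hm1
  · rw [← hm1] at h₁ h₂
    rw [pow_one] at h₁ h₂
    rw [h₁, h₂]
  · obtain ⟨u, -, hu⟩ := Nat.exists_mul_mod_eq_one_of_coprime hc hm1
    have e1 : t₁ = t₁ ^ (s * u) := by
      rw [st18_pow_mod h₁ (s * u), hu, pow_one]
    have e2 : t₂ = t₂ ^ (s * u) := by
      rw [st18_pow_mod h₂ (s * u), hu, pow_one]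
    rw [e1, e2, pow_mul, pow_mul, h]


private lemma st18_orderOf {γ : Fˣ} (hγ : ∀ x : Fˣ, x ∈ Subgroup.zpowers γ) :
    orderOf γ = Fintype.card F - 1 := by
  rw [orderOf_eq_card_of_forall_mem_zpowers hγ, Nat.card_units, Nat.card_eq_fintype_card]

private lemma st18_gamma_nonsq (hodd : Odd (Fintype.card F)) {γ : Fˣ}
    (hγ : ∀ x : Fˣ, x ∈ Subgroup.zpowers γ) : ¬ IsSquare ((γ : F)) := by
  intro hs
  have hne : (γ : F) ≠ 0 := Units.ne_zero γ
  have h1 : (γ : F) ^ ((Fintype.card F - 1) / 2) = 1 := (st18_sq_iff hodd hne).mp hs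
  have h2 : (γ : Fˣ) ^ ((Fintype.card F - 1) / 2) = 1 := by
    apply Units.ext
    rwa [Units.val_pow_eq_pow_val, Units.val_one]
  have h3 := orderOf_dvd_of_pow_eq_one h2
  rw [st18_orderOf hγ] at h3
  have hc3 := st18_card_ge_three hodd
  rw [Nat.odd_iff] at hodd
  have h4 := Nat.le_of_dvd (by omega) h3
  omega

/-- witness of non-coprimality: a nontrivial m-th root killed by r -/
private lemma st18_bad_root (hodd : Odd (Fintype.card F)) {γ : Fˣ}
    (hγ : ∀ x : Fˣ, x ∈ Subgroup.zpowers γ) {r : ℕ}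
    (hr : ¬ Nat.Coprime r ((Fintype.card F - 1) / 2)) :
    ∃ t : F, t ≠ 1 ∧ (∃ y : F, y ≠ 0 ∧ t = y ^ 2) ∧
      t ^ ((Fintype.card F - 1) / 2) = 1 ∧ t ^ r = 1 := by
  set m := (Fintype.card F - 1) / 2 with hm
  have hm1 : 1 ≤ m := by
    have := st18_card_ge_three hodd; rw [Nat.odd_iff] at hodd; omega
  set d := Nat.gcd r m with hd
  have hdm : d ∣ m := Nat.gcd_dvd_right r m
  have hdr : d ∣ r := Nat.gcd_dvd_left r m
  have hd2 : 2 ≤ d := by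
    rcases Nat.lt_or_ge d 2 with h | h
    · interval_cases d
      · exact absurd (Nat.eq_zero_of_gcd_eq_zero_right hd.symm) (by omega)
      · exact absurd hd.symm hr
    · exact h
  set k := m / d with hk
  have hkm : d * k = m := Nat.mul_div_cancel' hdm
  have hk1 : 1 ≤ k := by
    rcases Nat.eq_zero_or_pos k with h | h
    · rw [h, Nat.mul_zero] at hkm; omega
    · exact h
  have hklt : 2 * k < 2 * m := by nlinarith
  have htne : (γ : Fˣ) ^ (2 * k) ≠ 1 := by
    intro h
    have h3 := orderOf_dvd_of_pow_eq_one h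
    rw [st18_orderOf hγ, ← st18_two_mul_m hodd, ← hm] at h3
    have := Nat.le_of_dvd (by omega) h3
    omega
  have hord : (γ : Fˣ) ^ (2 * m) = 1 := by
    have h := pow_orderOf_eq_one γ
    rwa [st18_orderOf hγ, ← st18_two_mul_m hodd, ← hm] at h
  have hvord : ((γ : F)) ^ (2 * m) = 1 := by
    have := congrArg (Units.val) hord
    simpa using this
  obtain ⟨r', hr'⟩ := hdr
  refine ⟨((γ : F)) ^ (2 * k), ?_, ⟨(γ : F) ^ k, pow_ne_zero _ (Units.ne_zero γ),
      by rw [← pow_mul, mul_comm k 2]⟩, ?_, ?_⟩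
  · intro h
    apply htne
    apply Units.ext
    rw [Units.val_pow_eq_pow_val, Units.val_one]
    exact h
  · rw [← pow_mul, show 2 * k * m = 2 * m * k by ring, pow_mul, hvord, one_pow]
  · rw [← pow_mul, show 2 * k * r = 2 * (d * k) * r' by rw [hr']; ring, hkm, pow_mul,
      hvord, one_pow]

open scoped Classical in
private noncomputable def st18Phi (γ : Fˣ) (p : (F × F) × ℕ × ℕ) : F → F := fun x =>
  if x = 0 then 0 else
  if IsSquare x then p.1.2 * x ^ p.2.2 else p.1.1 * (((γ : F))⁻¹ * x) ^ p.2.1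

private lemma st18_exist_sq_iff (hodd : Odd (Fintype.card F)) {x : F} (hx : x ≠ 0) :
    (∃ y : F, y ≠ 0 ∧ x = y ^ 2) ↔ IsSquare x := by
  constructor
  · rintro ⟨y, -, rfl⟩
    exact ⟨y, sq y⟩
  · rintro ⟨r, rfl⟩
    exact ⟨r, fun h => hx (by rw [h, mul_zero]), (sq r).symm⟩

private lemma st18_phi_inj (hodd : Odd (Fintype.card F)) {γ : Fˣ}
    (hγ : ∀ x : Fˣ, x ∈ Subgroup.zpowers γ) {b₁ b₂ : F} {s₁ s₂ : ℕ}
    (hb₁ : b₁ ≠ 0) (hb₂ : b₂ ≠ 0) (hxor : IsSquare b₁ ↔ ¬ IsSquare b₂)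
    (hs₁ : Nat.Coprime s₁ ((Fintype.card F - 1) / 2))
    (hs₂ : Nat.Coprime s₂ ((Fintype.card F - 1) / 2)) :
    Function.Injective (st18Phi γ ((b₁, b₂), s₁, s₂)) := by
  set m := (Fintype.card F - 1) / 2 with hm
  have hm1 : 1 ≤ m := by
    have := st18_card_ge_three hodd; rw [Nat.odd_iff] at hodd; omega
  have hg0 : (γ : F) ≠ 0 := Units.ne_zero γ
  have hgns : ¬ IsSquare ((γ : F)) := st18_gamma_nonsq hodd hγ
  have hgm : ((γ : F)) ^ m = -1 := st18_nonsq_pow hodd hg0 hgns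
  have hu : ∀ z : F, z ≠ 0 → ¬ IsSquare z → ((γ : F))⁻¹ * z ≠ 0 ∧ (((γ : F))⁻¹ * z) ^ m = 1 := by
    intro z hz hzs
    refine ⟨mul_ne_zero (inv_ne_zero hg0) hz, ?_⟩
    rw [mul_pow, inv_pow, hgm, st18_nonsq_pow hodd hz hzs]
    norm_num
  have hval_sq : ∀ z : F, z ≠ 0 → IsSquare z →
      st18Phi γ ((b₁, b₂), s₁, s₂) z = b₂ * z ^ s₂ := by
    intro z hz hzs; simp [st18Phi, hz, hzs]
  have hval_ns : ∀ z : F, z ≠ 0 → ¬ IsSquare z →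
      st18Phi γ ((b₁, b₂), s₁, s₂) z = b₁ * (((γ : F))⁻¹ * z) ^ s₁ := by
    intro z hz hzs; simp [st18Phi, hz, hzs]
  have hne : ∀ z : F, z ≠ 0 → st18Phi γ ((b₁, b₂), s₁, s₂) z ≠ 0 := by
    intro z hz
    by_cases hzs : IsSquare z
    · rw [hval_sq z hz hzs]; exact mul_ne_zero hb₂ (pow_ne_zero _ hz)
    · rw [hval_ns z hz hzs]; exact mul_ne_zero hb₁ (pow_ne_zero _ (hu z hz hzs).1)
  have hsqv_sq : ∀ z : F, z ≠ 0 → IsSquare z →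
      (IsSquare (st18Phi γ ((b₁, b₂), s₁, s₂) z) ↔ IsSquare b₂) := by
    intro z hz hzs
    rw [hval_sq z hz hzs]
    exact st18_mul_sq_iff hodd hb₂ (pow_ne_zero _ hz) (hzs.pow _)
  have hsqv_ns : ∀ z : F, z ≠ 0 → ¬ IsSquare z →
      (IsSquare (st18Phi γ ((b₁, b₂), s₁, s₂) z) ↔ IsSquare b₁) := by
    intro z hz hzs
    rw [hval_ns z hz hzs]
    obtain ⟨h1, h2⟩ := hu z hz hzs
    exact st18_mul_sq_iff hodd hb₁ (pow_ne_zero _ h1)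
      (((st18_sq_iff hodd h1).mpr h2).pow _)
  intro x y hxy
  by_cases hx0 : x = 0
  · by_cases hy0 : y = 0
    · rw [hx0, hy0]
    · exfalso
      apply hne y hy0
      rw [← hxy, hx0]
      simp [st18Phi]
  · by_cases hy0 : y = 0
    · exfalso
      apply hne x hx0
      rw [hxy, hy0]
      simp [st18Phi]
    · by_cases hxs : IsSquare x <;> by_cases hys : IsSquare y
      · rw [hval_sq x hx0 hxs, hval_sq y hy0 hys] at hxy
        exact st18_pow_inj hm1 hs₂ ((st18_sq_iff hodd hx0).mp hxs)
          ((st18_sq_iff hodd hy0).mp hys) (mul_left_cancel₀ hb₂ hxy)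
      · have h1 := hsqv_sq x hx0 hxs
        have h2 := hsqv_ns y hy0 hys
        rw [hxy] at h1
        tauto
      · have h1 := hsqv_ns x hx0 hxs
        have h2 := hsqv_sq y hy0 hys
        rw [hxy] at h1
        tauto
      · rw [hval_ns x hx0 hxs, hval_ns y hy0 hys] at hxy
        have := st18_pow_inj hm1 hs₁ (hu x hx0 hxs).2 (hu y hy0 hys).2
          (mul_left_cancel₀ hb₁ hxy)
        exact mul_left_cancel₀ (inv_ne_zero hg0) this

private lemma st18_phi_mem (hodd : Odd (Fintype.card F)) {γ : Fˣ}
    (hγ : ∀ x : Fˣ, x ∈ Subgroup.zpowers γ) {b₁ b₂ : F} {s₁ s₂ : ℕ}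
    (hb₁ : b₁ ≠ 0) (hb₂ : b₂ ≠ 0) (hxor : IsSquare b₁ ↔ ¬ IsSquare b₂)
    (hs₁m : s₁ ∈ Finset.Ioc 0 ((Fintype.card F - 1) / 2))
    (hs₂m : s₂ ∈ Finset.Ioc 0 ((Fintype.card F - 1) / 2))
    (hs₁ : Nat.Coprime s₁ ((Fintype.card F - 1) / 2))
    (hs₂ : Nat.Coprime s₂ ((Fintype.card F - 1) / 2)) :
    Function.Bijective (st18Phi γ ((b₁, b₂), s₁, s₂)) ∧
      ∃ (a₁ a₂ : F) (r₁ r₂ : ℕ),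
        a₁ ≠ 0 ∧ a₂ ≠ 0 ∧
        1 ≤ r₁ ∧ r₁ ≤ Fintype.card F - 1 ∧ 1 ≤ r₂ ∧ r₂ ≤ Fintype.card F - 1 ∧
        st18Phi γ ((b₁, b₂), s₁, s₂) 0 = 0 ∧
        (∀ x : F, x ≠ 0 → ¬(∃ y : F, y ≠ 0 ∧ x = y ^ 2) →
          st18Phi γ ((b₁, b₂), s₁, s₂) x = a₁ * x ^ r₁) ∧
        (∀ x : F, x ≠ 0 → (∃ y : F, y ≠ 0 ∧ x = y ^ 2) →
          st18Phi γ ((b₁, b₂), s₁, s₂) x = a₂ * x ^ r₂) := by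
  have hmq : (Fintype.card F - 1) / 2 ≤ Fintype.card F - 1 := Nat.div_le_self _ _
  simp only [Finset.mem_Ioc] at hs₁m hs₂m
  have hg0 : (γ : F) ≠ 0 := Units.ne_zero γ
  constructor
  · exact Finite.injective_iff_bijective.mp (st18_phi_inj hodd hγ hb₁ hb₂ hxor hs₁ hs₂)
  · refine ⟨b₁ * (((γ : F))⁻¹) ^ s₁, b₂, s₁, s₂,
      mul_ne_zero hb₁ (pow_ne_zero _ (inv_ne_zero hg0)), hb₂,
      hs₁m.1, le_trans hs₁m.2 hmq, hs₂m.1, le_trans hs₂m.2 hmq, by simp [st18Phi], ?_, ?_⟩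
    · intro x hx hxs
      rw [st18_exist_sq_iff hodd hx] at hxs
      simp [st18Phi, hx, hxs, mul_pow, mul_assoc]
    · intro x hx hxs
      rw [st18_exist_sq_iff hodd hx] at hxs
      simp [st18Phi, hx, hxs]

private lemma st18_repr (hodd : Odd (Fintype.card F)) {γ : Fˣ}
    (hγ : ∀ x : Fˣ, x ∈ Subgroup.zpowers γ) {f : F → F}
    (hbij : Function.Bijective f) {a₁ a₂ : F} {r₁ r₂ : ℕ}
    (ha₁ : a₁ ≠ 0) (ha₂ : a₂ ≠ 0) (hr₁ : 1 ≤ r₁) (hr₂ : 1 ≤ r₂) (h0 : f 0 = 0)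
    (hns : ∀ x : F, x ≠ 0 → ¬(∃ y : F, y ≠ 0 ∧ x = y ^ 2) → f x = a₁ * x ^ r₁)
    (hsq : ∀ x : F, x ≠ 0 → (∃ y : F, y ≠ 0 ∧ x = y ^ 2) → f x = a₂ * x ^ r₂) :
    ∃ (b₁ b₂ : F) (s₁ s₂ : ℕ),
      b₁ ≠ 0 ∧ b₂ ≠ 0 ∧ (IsSquare b₁ ↔ ¬ IsSquare b₂) ∧
      s₁ ∈ Finset.Ioc 0 ((Fintype.card F - 1) / 2) ∧
      s₂ ∈ Finset.Ioc 0 ((Fintype.card F - 1) / 2) ∧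
      Nat.Coprime s₁ ((Fintype.card F - 1) / 2) ∧
      Nat.Coprime s₂ ((Fintype.card F - 1) / 2) ∧
      st18Phi γ ((b₁, b₂), s₁, s₂) = f := by
  set m := (Fintype.card F - 1) / 2 with hm
  have hm1 : 1 ≤ m := by
    have := st18_card_ge_three hodd; rw [Nat.odd_iff] at hodd; omega
  have hg0 : (γ : F) ≠ 0 := Units.ne_zero γ
  have hgns : ¬ IsSquare ((γ : F)) := st18_gamma_nonsq hodd hγ
  have hnc : ∀ x : F, x ≠ 0 → ¬ IsSquare x → f x = a₁ * x ^ r₁ := fun x hx hxs =>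
    hns x hx (fun h => hxs ((st18_exist_sq_iff hodd hx).mp h))
  have hsc : ∀ x : F, x ≠ 0 → IsSquare x → f x = a₂ * x ^ r₂ := fun x hx hxs =>
    hsq x hx ((st18_exist_sq_iff hodd hx).mpr hxs)
  have hu : ∀ z : F, z ≠ 0 → ¬ IsSquare z →
      (((γ : F))⁻¹ * z ≠ 0 ∧ (((γ : F))⁻¹ * z) ^ m = 1) := by
    intro z hz hzs
    refine ⟨mul_ne_zero (inv_ne_zero hg0) hz, ?_⟩
    rw [mul_pow, inv_pow, st18_nonsq_pow hodd hg0 hgns, st18_nonsq_pow hodd hz hzs]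
    norm_num
  have hcr₂ : Nat.Coprime r₂ m := by
    by_contra hc
    obtain ⟨t, ht1, ⟨y, hy0, hty⟩, htm, htr⟩ := st18_bad_root hodd hγ hc
    have ht0 : t ≠ 0 := by rw [hty]; exact pow_ne_zero _ hy0
    have hts : IsSquare t := ⟨y, by rw [hty, sq]⟩
    have h1 : f t = a₂ := by rw [hsc t ht0 hts, htr, mul_one]
    have h2 : f 1 = a₂ := by rw [hsc 1 one_ne_zero IsSquare.one, one_pow, mul_one]
    exact ht1 (hbij.1 (h1.trans h2.symm))
  have hcr₁ : Nat.Coprime r₁ m := by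
    by_contra hc
    obtain ⟨t, ht1, ⟨y, hy0, hty⟩, htm, htr⟩ := st18_bad_root hodd hγ hc
    have ht0 : t ≠ 0 := by rw [hty]; exact pow_ne_zero _ hy0
    have hts : IsSquare t := ⟨y, by rw [hty, sq]⟩
    have hgt0 : (γ : F) * t ≠ 0 := mul_ne_zero hg0 ht0
    have hgts : ¬ IsSquare ((γ : F) * t) := by
      rw [st18_mul_sq_iff hodd hg0 ht0 hts]; exact hgns
    have h1 : f ((γ : F) * t) = a₁ * (γ : F) ^ r₁ := by
      rw [hnc _ hgt0 hgts, mul_pow, htr, mul_one]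
    have h2 : f ((γ : F)) = a₁ * (γ : F) ^ r₁ := hnc _ hg0 hgns
    have h3 := hbij.1 (h1.trans h2.symm)
    exact ht1 (mul_left_cancel₀ hg0 (by rw [h3, mul_one]))
  have hsdef : ∀ r : ℕ, 1 ≤ r → Nat.Coprime r m →
      ∃ s : ℕ, s ∈ Finset.Ioc 0 m ∧ Nat.Coprime s m ∧
        ∀ t : F, t ^ m = 1 → t ^ r = t ^ s := by
    intro r hr hc
    by_cases hrm : r % m = 0
    · have hdvd : m ∣ r := Nat.dvd_of_mod_eq_zero hrm
      have hmone : m = 1 := Nat.eq_one_of_dvd_one (hc ▸ Nat.dvd_gcd hdvd dvd_rfl)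
      refine ⟨m, Finset.mem_Ioc.mpr ⟨by omega, le_refl m⟩, by simp [hmone], ?_⟩
      intro t htm
      rw [st18_pow_mod htm r, hrm, pow_zero, htm]
    · refine ⟨r % m, Finset.mem_Ioc.mpr ⟨by omega, le_of_lt (Nat.mod_lt r (by omega))⟩,
        ?_, fun t htm => st18_pow_mod htm r⟩
      unfold Nat.Coprime
      rw [← Nat.gcd_rec, Nat.gcd_comm]
      exact hc
  obtain ⟨s₁, hs₁m, hs₁c, hs₁e⟩ := hsdef r₁ hr₁ hcr₁
  obtain ⟨s₂, hs₂m, hs₂c, hs₂e⟩ := hsdef r₂ hr₂ hcr₂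
  have hb₁0 : a₁ * (γ : F) ^ r₁ ≠ 0 := mul_ne_zero ha₁ (pow_ne_zero _ hg0)
  have hkey : ∀ x : F, x ≠ 0 → ¬ IsSquare x →
      f x = (a₁ * (γ : F) ^ r₁) * (((γ : F))⁻¹ * x) ^ r₁ := by
    intro x hx hxs
    rw [hnc x hx hxs, mul_pow, inv_pow]
    field_simp
  have hfsq : ∀ x : F, x ≠ 0 → IsSquare x → (IsSquare (f x) ↔ IsSquare a₂) := by
    intro x hx hxs
    rw [hsc x hx hxs]
    exact st18_mul_sq_iff hodd ha₂ (pow_ne_zero _ hx) (hxs.pow _)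
  have hfns : ∀ x : F, x ≠ 0 → ¬ IsSquare x →
      (IsSquare (f x) ↔ IsSquare (a₁ * (γ : F) ^ r₁)) := by
    intro x hx hxs
    rw [hkey x hx hxs]
    obtain ⟨h1, h2⟩ := hu x hx hxs
    exact st18_mul_sq_iff hodd hb₁0 (pow_ne_zero _ h1)
      (((st18_sq_iff hodd h1).mpr h2).pow _)
  have hxor : IsSquare (a₁ * (γ : F) ^ r₁) ↔ ¬ IsSquare a₂ := by
    by_contra hiff
    have hiff' : IsSquare (a₁ * (γ : F) ^ r₁) ↔ IsSquare a₂ := by tauto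
    by_cases hsb : IsSquare a₂
    · obtain ⟨x, hxg⟩ := hbij.2 ((γ : F))
      have hx0 : x ≠ 0 := by rintro rfl; rw [h0] at hxg; exact hg0 hxg.symm
      by_cases hxs : IsSquare x
      · have h := hfsq x hx0 hxs
        rw [hxg] at h
        exact hgns (h.mpr hsb)
      · have h := hfns x hx0 hxs
        rw [hxg] at h
        exact hgns (h.mpr (hiff'.mpr hsb))
    · obtain ⟨x, hx1⟩ := hbij.2 (1 : F)
      have hx0 : x ≠ 0 := by rintro rfl; rw [h0] at hx1; exact one_ne_zero hx1.symm
      by_cases hxs : IsSquare x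
      · have h := hfsq x hx0 hxs
        rw [hx1] at h
        exact hsb (h.mp IsSquare.one)
      · have h := hfns x hx0 hxs
        rw [hx1] at h
        exact hsb (hiff'.mp (h.mp IsSquare.one))
  refine ⟨a₁ * (γ : F) ^ r₁, a₂, s₁, s₂, hb₁0, ha₂, hxor, hs₁m, hs₂m, hs₁c, hs₂c, ?_⟩
  funext x
  by_cases hx0 : x = 0
  · rw [hx0, h0]; simp [st18Phi]
  by_cases hxs : IsSquare x
  · have hv : st18Phi γ ((a₁ * (γ : F) ^ r₁, a₂), s₁, s₂) x = a₂ * x ^ s₂ := by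
      simp [st18Phi, hx0, hxs]
    rw [hv, hsc x hx0 hxs, hs₂e x ((st18_sq_iff hodd hx0).mp hxs)]
  · have hv : st18Phi γ ((a₁ * (γ : F) ^ r₁, a₂), s₁, s₂) x =
        (a₁ * (γ : F) ^ r₁) * (((γ : F))⁻¹ * x) ^ s₁ := by
      simp [st18Phi, hx0, hxs]
    rw [hv, hkey x hx0 hxs, hs₁e _ (hu x hx0 hxs).2]

private lemma st18_Ioc_inj {m a b : ℕ} (ha : a ∈ Finset.Ioc 0 m) (hb : b ∈ Finset.Ioc 0 m)
    (h : a % m = b % m) : a = b := by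
  simp only [Finset.mem_Ioc] at ha hb
  rcases eq_or_lt_of_le ha.2 with h1 | h1 <;> rcases eq_or_lt_of_le hb.2 with h2 | h2
  · omega
  · rw [h1, Nat.mod_self, Nat.mod_eq_of_lt h2] at h; omega
  · rw [h2, Nat.mod_self, Nat.mod_eq_of_lt h1] at h; omega
  · rw [Nat.mod_eq_of_lt h1, Nat.mod_eq_of_lt h2] at h; exact h

private lemma st18_param_inj (hodd : Odd (Fintype.card F)) {γ : Fˣ}
    (hγ : ∀ x : Fˣ, x ∈ Subgroup.zpowers γ) {b₁ b₂ b₁' b₂' : F} {s₁ s₂ s₁' s₂' : ℕ}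
    (hb₁ : b₁ ≠ 0) (hb₂ : b₂ ≠ 0)
    (hs₁m : s₁ ∈ Finset.Ioc 0 ((Fintype.card F - 1) / 2))
    (hs₂m : s₂ ∈ Finset.Ioc 0 ((Fintype.card F - 1) / 2))
    (hs₁m' : s₁' ∈ Finset.Ioc 0 ((Fintype.card F - 1) / 2))
    (hs₂m' : s₂' ∈ Finset.Ioc 0 ((Fintype.card F - 1) / 2))
    (h : st18Phi γ ((b₁, b₂), s₁, s₂) = st18Phi γ ((b₁', b₂'), s₁', s₂')) :
    b₁ = b₁' ∧ b₂ = b₂' ∧ s₁ = s₁' ∧ s₂ = s₂' := by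
  set m := (Fintype.card F - 1) / 2 with hm
  have hg0 : (γ : F) ≠ 0 := Units.ne_zero γ
  have hgns : ¬ IsSquare ((γ : F)) := st18_gamma_nonsq hodd hγ
  have hord2 : orderOf ((γ : Fˣ) ^ 2) = m := by
    rw [orderOf_pow, st18_orderOf hγ, ← st18_two_mul_m hodd, ← hm]
    have hgcd : Nat.gcd 2 (2 * m) = 2 := Nat.gcd_eq_left ⟨m, rfl⟩
    rw [Nat.gcd_comm (2 * m) 2, hgcd]
    omega
  have hb2 : b₂ = b₂' := by
    have e1 := congrFun h 1
    simpa [st18Phi, IsSquare.one] using e1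
  have hb1 : b₁ = b₁' := by
    have e1 := congrFun h ((γ : F))
    simpa [st18Phi, hg0, hgns, inv_mul_cancel₀] using e1
  have hsqg2 : IsSquare ((γ : F) ^ 2) := ⟨(γ : F), sq _⟩
  have hg2 : ((γ : F) ^ 2) ≠ 0 := pow_ne_zero _ hg0
  have hmodeq : ∀ a b : ℕ, ((γ : F) ^ 2) ^ a = ((γ : F) ^ 2) ^ b → a % m = b % m := by
    intro a b hab
    have huab : ((γ : Fˣ) ^ 2) ^ a = ((γ : Fˣ) ^ 2) ^ b := by
      apply Units.ext
      push_cast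
      exact hab
    have hme := pow_eq_pow_iff_modEq.mp huab
    rw [hord2] at hme
    exact hme
  have hs2 : s₂ = s₂' := by
    have e1 := congrFun h ((γ : F) ^ 2)
    simp only [st18Phi, if_neg hg2, if_pos hsqg2] at e1
    rw [← hb2] at e1
    exact st18_Ioc_inj hs₂m hs₂m' (hmodeq _ _ (mul_left_cancel₀ hb₂ e1))
  have hs1 : s₁ = s₁' := by
    have hg3 : ((γ : F) ^ 3) ≠ 0 := pow_ne_zero _ hg0
    have hg3ns : ¬ IsSquare ((γ : F) ^ 3) := by
      have h3 : (γ : F) ^ 3 = (γ : F) * (γ : F) ^ 2 := by ring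
      rw [h3, st18_mul_sq_iff hodd hg0 hg2 hsqg2]
      exact hgns
    have e1 := congrFun h ((γ : F) ^ 3)
    simp only [st18Phi, if_neg hg3, if_neg hg3ns] at e1
    rw [← hb1] at e1
    have hred : ((γ : F))⁻¹ * (γ : F) ^ 3 = (γ : F) ^ 2 := by
      field_simp
    rw [hred] at e1
    exact st18_Ioc_inj hs₁m hs₁m' (hmodeq _ _ (mul_left_cancel₀ hb₁ e1))
  exact ⟨hb1, hb2, hs1, hs2⟩

private lemma st18_card_coprime {m : ℕ} (hm : 1 ≤ m) :
    ((Finset.Ioc 0 m).filter (fun s => Nat.Coprime s m)).card = Nat.totient m := by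
  rcases eq_or_lt_of_le hm with h1 | h1
  · rw [← h1]
    decide
  · have he : (Finset.Ioc 0 m).filter (fun s => Nat.Coprime s m) =
        (Finset.range m).filter (m.Coprime ·) := by
      ext x
      simp only [Finset.mem_filter, Finset.mem_Ioc, Finset.mem_range]
      constructor
      · rintro ⟨⟨hx0, hxm⟩, hc⟩
        rcases eq_or_lt_of_le hxm with h2 | h2
        · exfalso
          rw [h2] at hc
          have := Nat.gcd_self m
          rw [Nat.Coprime] at hc
          omega
        · exact ⟨h2, Nat.coprime_comm.mp hc⟩
      · rintro ⟨hx, hc⟩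
        have hc' := Nat.coprime_comm.mp hc
        have hx0 : x ≠ 0 := by
          rintro rfl
          rw [Nat.Coprime, Nat.gcd_zero_left] at hc'
          omega
        exact ⟨⟨by omega, by omega⟩, hc'⟩
    rw [he]
    rfl

open scoped Classical in
private lemma st18_card_pairs (hodd : Odd (Fintype.card F)) {γ : Fˣ}
    (hγ : ∀ x : Fˣ, x ∈ Subgroup.zpowers γ) :
    (Finset.univ.filter
        (fun b : F × F => b.1 ≠ 0 ∧ b.2 ≠ 0 ∧ (IsSquare b.1 ↔ ¬ IsSquare b.2))).card =
      2 * ((Fintype.card F - 1) / 2) * ((Fintype.card F - 1) / 2) := by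
  set m := (Fintype.card F - 1) / 2 with hm
  have h2m : 2 * m = Fintype.card F - 1 := st18_two_mul_m hodd
  have hg0 : (γ : F) ≠ 0 := Units.ne_zero γ
  have hgns : ¬ IsSquare ((γ : F)) := st18_gamma_nonsq hodd hγ
  have hgm : ((γ : F)) ^ m = -1 := st18_nonsq_pow hodd hg0 hgns
  set A := Finset.univ.filter (fun x : F => x ≠ 0 ∧ IsSquare x) with hA
  set N := Finset.univ.filter (fun x : F => x ≠ 0 ∧ ¬ IsSquare x) with hN
  have hAN : Disjoint A N := by
    rw [Finset.disjoint_left]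
    intro a ha hn
    rw [hA, Finset.mem_filter] at ha
    rw [hN, Finset.mem_filter] at hn
    exact hn.2.2 ha.2.2
  have hcardsum : A.card + N.card = Fintype.card F - 1 := by
    rw [← Finset.card_union_of_disjoint hAN]
    have hun : A ∪ N = Finset.univ.erase 0 := by
      ext x
      simp only [hA, hN, Finset.mem_union, Finset.mem_filter, Finset.mem_univ, true_and,
        Finset.mem_erase]
      tauto
    rw [hun, Finset.card_erase_of_mem (Finset.mem_univ 0), Finset.card_univ]
  have hAeqN : A.card = N.card := by
    apply Finset.card_nbij' (fun x => (γ : F) * x) (fun y => ((γ : F))⁻¹ * y)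
    · intro a haA
      beta_reduce
      rw [hA, Finset.mem_coe, Finset.mem_filter] at haA
      rw [hN, Finset.mem_coe, Finset.mem_filter]
      refine ⟨Finset.mem_univ _, mul_ne_zero hg0 haA.2.1, ?_⟩
      rw [st18_mul_sq_iff hodd hg0 haA.2.1 haA.2.2]
      exact hgns
    · intro b hbN
      beta_reduce
      rw [hN, Finset.mem_coe, Finset.mem_filter] at hbN
      rw [hA, Finset.mem_coe, Finset.mem_filter]
      have hb0 : ((γ : F))⁻¹ * b ≠ 0 := mul_ne_zero (inv_ne_zero hg0) hbN.2.1
      refine ⟨Finset.mem_univ _, hb0, ?_⟩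
      rw [st18_sq_iff hodd hb0, mul_pow, inv_pow, hgm,
        st18_nonsq_pow hodd hbN.2.1 hbN.2.2]
      norm_num
    · intro a _
      beta_reduce
      rw [inv_mul_cancel_left₀ hg0]
    · intro b _
      beta_reduce
      rw [mul_inv_cancel_left₀ hg0]
  have hAcard : A.card = m := by omega
  have hNcard : N.card = m := by omega
  have hB : Finset.univ.filter
      (fun b : F × F => b.1 ≠ 0 ∧ b.2 ≠ 0 ∧ (IsSquare b.1 ↔ ¬ IsSquare b.2)) =
      (A ×ˢ N) ∪ (N ×ˢ A) := by
    ext b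
    simp only [hA, hN, Finset.mem_filter, Finset.mem_univ, true_and, Finset.mem_union,
      Finset.mem_product]
    tauto
  have hdisj : Disjoint (A ×ˢ N) (N ×ˢ A) := by
    rw [Finset.disjoint_left]
    intro b hb1 hb2
    simp only [Finset.mem_product, hA, hN, Finset.mem_filter] at hb1 hb2
    exact hb2.1.2.2 hb1.1.2.2
  rw [hB, Finset.card_union_of_disjoint hdisj, Finset.card_product, Finset.card_product,
    hAcard, hNcard]
  ring

end Stmt18Aux

/-- Corollary 4.5 (count): Let `q` be an odd prime power and `γ` a primitive element
of `F_q`. The number of bijections `f : F_q → F_q` of the form `f(0) = 0`,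
`f(x) = a₁x^{r₁}` on non-squares and `f(x) = a₂x^{r₂}` on nonzero squares, with
`a₁, a₂ ∈ F_q^*` and `1 ≤ r₁, r₂ ≤ q−1`, equals `(q−1)²·φ((q−1)/2)²/2`. -/
theorem stmt18 {F : Type*} [Field F] [Fintype F]
    (hodd : Odd (Fintype.card F))
    (γ : Fˣ) (hγ : ∀ x : Fˣ, x ∈ Subgroup.zpowers γ) :
    {f : F → F | Function.Bijective f ∧
        ∃ (a₁ a₂ : F) (r₁ r₂ : ℕ),
          a₁ ≠ 0 ∧ a₂ ≠ 0 ∧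
          1 ≤ r₁ ∧ r₁ ≤ Fintype.card F - 1 ∧ 1 ≤ r₂ ∧ r₂ ≤ Fintype.card F - 1 ∧
          f 0 = 0 ∧
          (∀ x : F, x ≠ 0 → ¬(∃ y : F, y ≠ 0 ∧ x = y ^ 2) → f x = a₁ * x ^ r₁) ∧
          (∀ x : F, x ≠ 0 → (∃ y : F, y ≠ 0 ∧ x = y ^ 2) → f x = a₂ * x ^ r₂)}.ncard =
      (Fintype.card F - 1) ^ 2 * Nat.totient ((Fintype.card F - 1) / 2) ^ 2 / 2 := by
  classical
  have h2m : 2 * ((Fintype.card F - 1) / 2) = Fintype.card F - 1 := st18_two_mul_m hodd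
  have hq3 : 3 ≤ Fintype.card F := st18_card_ge_three hodd
  have hm1 : 1 ≤ (Fintype.card F - 1) / 2 := by omega
  set P : Finset ((F × F) × ℕ × ℕ) :=
    (Finset.univ.filter
        (fun b : F × F => b.1 ≠ 0 ∧ b.2 ≠ 0 ∧ (IsSquare b.1 ↔ ¬ IsSquare b.2))) ×ˢ
      (((Finset.Ioc 0 ((Fintype.card F - 1) / 2)).filter
          (fun s => Nat.Coprime s ((Fintype.card F - 1) / 2))) ×ˢ
        ((Finset.Ioc 0 ((Fintype.card F - 1) / 2)).filter
          (fun s => Nat.Coprime s ((Fintype.card F - 1) / 2)))) with hP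
  have hPmem : ∀ p : (F × F) × ℕ × ℕ, p ∈ P ↔
      (p.1.1 ≠ 0 ∧ p.1.2 ≠ 0 ∧ (IsSquare p.1.1 ↔ ¬ IsSquare p.1.2) ∧
        p.2.1 ∈ Finset.Ioc 0 ((Fintype.card F - 1) / 2) ∧
        p.2.2 ∈ Finset.Ioc 0 ((Fintype.card F - 1) / 2) ∧
        Nat.Coprime p.2.1 ((Fintype.card F - 1) / 2) ∧
        Nat.Coprime p.2.2 ((Fintype.card F - 1) / 2)) := by
    intro p
    rw [hP]
    simp only [Finset.mem_product, Finset.mem_filter, Finset.mem_univ, true_and]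
    tauto
  have hset : {f : F → F | Function.Bijective f ∧
      ∃ (a₁ a₂ : F) (r₁ r₂ : ℕ),
        a₁ ≠ 0 ∧ a₂ ≠ 0 ∧
        1 ≤ r₁ ∧ r₁ ≤ Fintype.card F - 1 ∧ 1 ≤ r₂ ∧ r₂ ≤ Fintype.card F - 1 ∧
        f 0 = 0 ∧
        (∀ x : F, x ≠ 0 → ¬(∃ y : F, y ≠ 0 ∧ x = y ^ 2) → f x = a₁ * x ^ r₁) ∧
        (∀ x : F, x ≠ 0 → (∃ y : F, y ≠ 0 ∧ x = y ^ 2) → f x = a₂ * x ^ r₂)} =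
      ↑(P.image (st18Phi γ)) := by
    ext f
    simp only [Set.mem_setOf_eq, Finset.coe_image, Set.mem_image, Finset.mem_coe]
    constructor
    · rintro ⟨hbij, a₁, a₂, r₁, r₂, ha₁, ha₂, hr₁, hr₁', hr₂, hr₂', h0, hns, hsq⟩
      obtain ⟨b₁, b₂, s₁, s₂, hb₁, hb₂, hxor, hs₁m, hs₂m, hs₁c, hs₂c, hfeq⟩ :=
        st18_repr hodd hγ hbij ha₁ ha₂ hr₁ hr₂ h0 hns hsq
      refine ⟨((b₁, b₂), s₁, s₂), ?_, hfeq⟩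
      rw [hPmem]
      exact ⟨hb₁, hb₂, hxor, hs₁m, hs₂m, hs₁c, hs₂c⟩
    · rintro ⟨⟨⟨b₁, b₂⟩, s₁, s₂⟩, hpP, rfl⟩
      rw [hPmem] at hpP
      obtain ⟨hb₁, hb₂, hxor, hs₁m, hs₂m, hs₁c, hs₂c⟩ := hpP
      exact st18_phi_mem hodd hγ hb₁ hb₂ hxor hs₁m hs₂m hs₁c hs₂c
  rw [hset, Set.ncard_coe_finset]
  have hinj : Set.InjOn (st18Phi γ) ↑P := by
    rintro ⟨⟨b₁, b₂⟩, s₁, s₂⟩ hp ⟨⟨b₁', b₂'⟩, s₁', s₂'⟩ hp' heq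
    rw [Finset.mem_coe, hPmem] at hp hp'
    obtain ⟨e1, e2, e3, e4⟩ := st18_param_inj hodd hγ hp.1 hp.2.1 hp.2.2.2.1
      hp.2.2.2.2.1 hp'.2.2.2.1 hp'.2.2.2.2.1 heq
    simp only [Prod.mk.injEq]
    exact ⟨⟨e1, e2⟩, e3, e4⟩
  rw [Finset.card_image_of_injOn hinj, hP, Finset.card_product, Finset.card_product,
    st18_card_pairs hodd hγ, st18_card_coprime hm1]
  have harith : ∀ n mm t : ℕ, 2 * mm = n →
      2 * mm * mm * (t * t) = n ^ 2 * t ^ 2 / 2 := by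
    intro n mm t h
    subst h
    have hzz : (2 * mm) ^ 2 * t ^ 2 = (2 * mm * mm * (t * t)) * 2 := by ring
    rw [hzz, Nat.mul_div_cancel _ two_pos]
  exact harith _ _ _ h2m
end
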